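/- arXiv:0811.1574 — 8 statements merged into one kernel-verified Lean document; each statement's English description precedes it below -/
import Mathlib

section
/- Let S be a finite monoid and let e, f ∈ S be idempotents generating the same two-sided ideal, i.e., SeS = SfS. Then there is a monoid isomorphism between e·S·e and f·S·f (with multiplication inherited from S and identities e and f, respectively); in particular, the maximal subgroups G_e and G_f (the groups of units of e·S·e and f·S·f) are isomorphic groups. -/
private lemma loc_eq {S : Type*} [Monoid S] [Finite S] (f g u v : S)
    (hff : f * f = f) (hgg : g * g = g) (hfg : f * g = g) (hgf : g * f = g)
    (hfu : f * u = u) (huf : u * f = u) (huv : u * (g * v) = f) : g = f := by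
  set A : Set S := {x : S | ∃ s : S, x = f * s * f} with hA
  have hmemI : ∀ z : S, f * z = z → z * f = z → z ∈ A := fun z h1 h2 => ⟨z, by rw [h1, h2]⟩
  have hmem : ∀ x ∈ A, f * x = x ∧ x * f = x := by
    rintro x ⟨s, rfl⟩
    constructor
    · rw [← mul_assoc, ← mul_assoc, hff]
    · rw [mul_assoc, hff]
  have hmapsTo : Set.MapsTo (fun z => u * z) A A := by
    rintro x hx
    obtain ⟨h1, h2⟩ := hmem x hx
    exact hmemI (u * x) (by rw [← mul_assoc, hfu]) (by rw [mul_assoc, h2])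
  have hsurj : Set.SurjOn (fun z => u * z) A A := by
    rintro x hx
    obtain ⟨h1, h2⟩ := hmem x hx
    refine ⟨g * (v * x), hmemI _ ?_ ?_, ?_⟩
    · rw [← mul_assoc, hfg]
    · rw [mul_assoc, mul_assoc, h2]
    · simp only
      rw [← mul_assoc, ← mul_assoc, mul_assoc u g v, huv, h1]
  have hbij := (Set.Finite.surjOn_iff_bijOn_of_mapsTo (Set.toFinite A) hmapsTo).mp hsurj
  have hfA : f ∈ A := hmemI f hff hff
  have hgvuA : g * (v * u) ∈ A := by
    refine hmemI _ ?_ ?_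
    · rw [← mul_assoc, hfg]
    · rw [mul_assoc, mul_assoc, huf]
  have key : g * (v * u) = f := by
    apply hbij.injOn hgvuA hfA
    simp only
    rw [← mul_assoc, ← mul_assoc, mul_assoc u g v, huv, hfu, huf]
  calc g = g * f := hgf.symm
    _ = g * (g * (v * u)) := by rw [key]
    _ = (g * g) * (v * u) := by rw [mul_assoc]
    _ = g * (v * u) := by rw [hgg]
    _ = f := key

/-- Main structural lemma: `J`-equivalent idempotents in a finite monoid are `D`-equivalent. -/
private lemma d_equiv {S : Type*} [Monoid S] [Finite S] (e f : S)
    (he : e * e = e) (hf : f * f = f)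
    (hJ : {x : S | ∃ u v : S, x = u * e * v} = {x : S | ∃ u v : S, x = u * f * v}) :
    ∃ a b : S, a * b = e ∧ b * a = f ∧ e * a = a ∧ a * f = a ∧ f * b = b ∧ b * e = b := by
  have heJ : e ∈ {x : S | ∃ u v : S, x = u * f * v} := by
    rw [← hJ]; exact ⟨1, 1, by simp⟩
  have hfJ : f ∈ {x : S | ∃ u v : S, x = u * e * v} := by
    rw [hJ]; exact ⟨1, 1, by simp⟩
  obtain ⟨u, v, huv⟩ := heJ
  obtain ⟨p, q, hpq⟩ := hfJ
  refine ⟨e * u * f, f * v * e, ?_, ?_, ?_, ?_, ?_, ?_⟩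
  rotate_left 2
  · rw [← mul_assoc, ← mul_assoc, he]
  · rw [mul_assoc, hf]
  · rw [← mul_assoc, ← mul_assoc, hf]
  · rw [mul_assoc, he]
  -- the two hard goals: (e*u*f)*(f*v*e) = e and (f*v*e)*(e*u*f) = f
  · calc (e * u * f) * (f * v * e) = e * (u * (f * f * (v * e))) := by simp only [mul_assoc]
      _ = e * (u * (f * (v * e))) := by rw [hf]
      _ = e * (u * f * v) * e := by simp only [mul_assoc]
      _ = e := by rw [← huv, he, he]
  · -- this is where finiteness (stability) is used
    have hea : e * (e * u * f) = e * u * f := by rw [← mul_assoc, ← mul_assoc, he]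
    have haf : (e * u * f) * f = e * u * f := by rw [mul_assoc, hf]
    have hfb : f * (f * v * e) = f * v * e := by rw [← mul_assoc, ← mul_assoc, hf]
    have hbe : (f * v * e) * e = f * v * e := by rw [mul_assoc, he]
    have hab : (e * u * f) * (f * v * e) = e := by
      calc (e * u * f) * (f * v * e) = e * (u * (f * f * (v * e))) := by simp only [mul_assoc]
        _ = e * (u * (f * (v * e))) := by rw [hf]
        _ = e * (u * f * v) * e := by simp only [mul_assoc]
        _ = e := by rw [← huv, he, he]
    -- g := b * a
    have hgg : ((f * v * e) * (e * u * f)) * ((f * v * e) * (e * u * f))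
        = (f * v * e) * (e * u * f) := by
      calc ((f * v * e) * (e * u * f)) * ((f * v * e) * (e * u * f))
          = (f * v * e) * ((e * u * f) * (f * v * e) * (e * u * f)) := by simp only [mul_assoc]
        _ = (f * v * e) * (e * (e * u * f)) := by rw [hab]
        _ = (f * v * e) * (e * u * f) := by rw [hea]
    have hfg : f * ((f * v * e) * (e * u * f)) = (f * v * e) * (e * u * f) := by
      rw [← mul_assoc, hfb]
    have hgf : ((f * v * e) * (e * u * f)) * f = (f * v * e) * (e * u * f) := by
      rw [mul_assoc, haf]
    have heagb : (e * u * f) * (((f * v * e) * (e * u * f)) * (f * v * e)) = e := by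
      calc (e * u * f) * (((f * v * e) * (e * u * f)) * (f * v * e))
          = ((e * u * f) * (f * v * e)) * ((e * u * f) * (f * v * e)) := by
            simp only [mul_assoc]
        _ = e := by rw [hab, he]
    -- u' := f * (p * a) * f, v' := f * (b * q) * f
    have hfu' : f * (f * (p * (e * u * f)) * f) = f * (p * (e * u * f)) * f := by
      rw [← mul_assoc, ← mul_assoc, hf]
    have hu'f : (f * (p * (e * u * f)) * f) * f = f * (p * (e * u * f)) * f := by
      rw [mul_assoc, hf]
    have hkey : (f * (p * (e * u * f)) * f) *
        (((f * v * e) * (e * u * f)) * (f * ((f * v * e) * q) * f)) = f := by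
      have Hff : ∀ z : S, f * (f * z) = f * z := fun z => by rw [← mul_assoc, hf]
      have Haf : ∀ z : S, (e * u * f) * (f * z) = (e * u * f) * z := fun z => by
        rw [← mul_assoc, haf]
      have Hfb : ∀ z : S, f * ((f * v * e) * z) = (f * v * e) * z := fun z => by
        rw [← mul_assoc, hfb]
      have Hab : ∀ z : S, (e * u * f) * ((f * v * e) * z) = e * z := fun z => by
        rw [← mul_assoc, hab]
      have Hea : ∀ z : S, e * ((e * u * f) * z) = (e * u * f) * z := fun z => by
        rw [← mul_assoc, hea]
      have Hbe : ∀ z : S, (f * v * e) * (e * z) = (f * v * e) * z := fun z => by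
        rw [← mul_assoc, hbe]
      have target : f * (p * (e * (q * f))) = f := by
        calc f * (p * (e * (q * f))) = f * (p * e * q) * f := by simp only [mul_assoc]
          _ = f := by rw [← hpq, hf, hf]
      calc (f * (p * (e * u * f)) * f) *
          (((f * v * e) * (e * u * f)) * (f * ((f * v * e) * q) * f))
          = f * (p * ((e*u*f) * (f * ((f*v*e) * ((e*u*f) * (f * ((f*v*e) * (q * f)))))))) := by
            simp only [mul_assoc]
        _ = f * (p * (e * (q * f))) := by
            simp only [Haf, Hfb, Hab, Hea, Hbe, Hff]
        _ = f := target
    exact loc_eq f ((f * v * e) * (e * u * f)) (f * (p * (e * u * f)) * f)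
      (f * ((f * v * e) * q) * f) hf hgg hfg hgf hfu' hu'f hkey

/-- If `e, f` are idempotents of a finite monoid `S` with `SeS = SfS`,
then there is a monoid isomorphism `eSe ≅ fSf` (a bijection preserving multiplication and
sending the identity `e` to the identity `f`); in particular it restricts to an isomorphism
of the maximal subgroups `G_e` and `G_f` (the groups of units of `eSe` and `fSf`). -/
theorem stmt0 (S : Type*) [Monoid S] [Finite S] (e f : S)
    (he : e * e = e) (hf : f * f = f)
    (hJ : {x : S | ∃ u v : S, x = u * e * v} = {x : S | ∃ u v : S, x = u * f * v}) :
    ∃ φ : S → S,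
      Set.BijOn φ {x : S | ∃ s : S, x = e * s * e} {x : S | ∃ s : S, x = f * s * f} ∧
      (∀ x ∈ {x : S | ∃ s : S, x = e * s * e}, ∀ y ∈ {x : S | ∃ s : S, x = e * s * e},
        φ (x * y) = φ x * φ y) ∧
      φ e = f ∧
      Set.BijOn φ
        {x : S | (∃ s : S, x = e * s * e) ∧
          ∃ y : S, (∃ s : S, y = e * s * e) ∧ x * y = e ∧ y * x = e}
        {x : S | (∃ s : S, x = f * s * f) ∧
          ∃ y : S, (∃ s : S, y = f * s * f) ∧ x * y = f ∧ y * x = f} := by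
  obtain ⟨a, b, hab, hba, hea, haf, hfb, hbe⟩ := d_equiv e f he hf hJ
  have hE : ∀ x ∈ {x : S | ∃ s : S, x = e * s * e}, e * x = x ∧ x * e = x := by
    rintro x ⟨s, rfl⟩
    exact ⟨by rw [← mul_assoc, ← mul_assoc, he], by rw [mul_assoc, he]⟩
  have hF : ∀ x ∈ {x : S | ∃ s : S, x = f * s * f}, f * x = x ∧ x * f = x := by
    rintro x ⟨s, rfl⟩
    exact ⟨by rw [← mul_assoc, ← mul_assoc, hf], by rw [mul_assoc, hf]⟩
  have hEI : ∀ z : S, e * z = z → z * e = z → z ∈ {x : S | ∃ s : S, x = e * s * e} :=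
    fun z h1 h2 => ⟨z, by rw [h1, h2]⟩
  have hFI : ∀ z : S, f * z = z → z * f = z → z ∈ {x : S | ∃ s : S, x = f * s * f} :=
    fun z h1 h2 => ⟨z, by rw [h1, h2]⟩
  have hφmem : ∀ x ∈ {x : S | ∃ s : S, x = e * s * e},
      b * x * a ∈ {x : S | ∃ s : S, x = f * s * f} := by
    intro x hx
    exact hFI _ (by rw [← mul_assoc, ← mul_assoc, hfb]) (by rw [mul_assoc, mul_assoc, haf,
      ← mul_assoc])
  have hψmem : ∀ y ∈ {x : S | ∃ s : S, x = f * s * f},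
      a * y * b ∈ {x : S | ∃ s : S, x = e * s * e} := by
    intro y hy
    exact hEI _ (by rw [← mul_assoc, ← mul_assoc, hea]) (by rw [mul_assoc, mul_assoc, hbe,
      ← mul_assoc])
  have hinv1 : ∀ x ∈ {x : S | ∃ s : S, x = e * s * e}, a * (b * x * a) * b = x := by
    intro x hx
    obtain ⟨h1, h2⟩ := hE x hx
    calc a * (b * x * a) * b = a * b * x * (a * b) := by simp only [mul_assoc]
      _ = e * x * e := by rw [hab]
      _ = x := by rw [h1, h2]
  have hinv2 : ∀ y ∈ {x : S | ∃ s : S, x = f * s * f}, b * (a * y * b) * a = y := by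
    intro y hy
    obtain ⟨h1, h2⟩ := hF y hy
    calc b * (a * y * b) * a = b * a * y * (b * a) := by simp only [mul_assoc]
      _ = f * y * f := by rw [hba]
      _ = y := by rw [h1, h2]
  have hmul : ∀ x ∈ {x : S | ∃ s : S, x = e * s * e}, ∀ y ∈ {x : S | ∃ s : S, x = e * s * e},
      b * (x * y) * a = (b * x * a) * (b * y * a) := by
    intro x hx y hy
    obtain ⟨hx1, hx2⟩ := hE x hx
    calc b * (x * y) * a = b * (x * (y * a)) := by simp only [mul_assoc]
      _ = b * (x * e * (y * a)) := by rw [hx2]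
      _ = b * (x * (a * b) * (y * a)) := by rw [hab]
      _ = (b * x * a) * (b * y * a) := by simp only [mul_assoc]
  have hφe : b * e * a = f := by rw [hbe, hba]
  have hψf : a * f * b = e := by rw [haf, hab]
  refine ⟨fun x => b * x * a, ?_, hmul, hφe, ?_⟩
  · exact Set.InvOn.bijOn ⟨fun x hx => hinv1 x hx, fun y hy => hinv2 y hy⟩
      (fun x hx => hφmem x hx) (fun y hy => hψmem y hy)
  · have hmulF : ∀ x ∈ {x : S | ∃ s : S, x = f * s * f}, ∀ y ∈ {x : S | ∃ s : S, x = f * s * f},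
        a * (x * y) * b = (a * x * b) * (a * y * b) := by
      intro x hx y hy
      obtain ⟨hx1, hx2⟩ := hF x hx
      calc a * (x * y) * b = a * (x * (y * b)) := by simp only [mul_assoc]
        _ = a * (x * f * (y * b)) := by rw [hx2]
        _ = a * (x * (b * a) * (y * b)) := by rw [hba]
        _ = (a * x * b) * (a * y * b) := by simp only [mul_assoc]
    apply Set.InvOn.bijOn (f' := fun y => a * y * b)
    · constructor
      · rintro x ⟨hx, y, hy, hxy, hyx⟩
        exact hinv1 x hx
      · rintro x ⟨hx, y, hy, hxy, hyx⟩
        exact hinv2 x hx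
    · rintro x ⟨hx, y, hy, hxy, hyx⟩
      refine ⟨hφmem x hx, b * y * a, hφmem y hy, ?_, ?_⟩
      · rw [← hmul x hx y hy, hxy, hφe]
      · rw [← hmul y hy x hx, hyx, hφe]
    · rintro x ⟨hx, y, hy, hxy, hyx⟩
      refine ⟨hψmem x hx, a * y * b, hψmem y hy, ?_, ?_⟩
      · rw [← hmulF x hx y hy, hxy, hψf]
      · rw [← hmulF y hy x hx, hyx, hψf]
end

section
/- Let S be a finite monoid and let s, x ∈ S. Then S(sx)S = SsS if and only if (sx)S = sS, and S(xs)S = SsS if and only if S(xs) = Ss. (Stability: an element J-equivalent to s of the form sx is R-equivalent to s, and one of the form xs is L-equivalent to s.) -/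
/-- Every element of a finite monoid has a positive idempotent power. -/
lemma exists_idem_pow {S : Type*} [Monoid S] [Finite S] (t : S) :
    ∃ n : ℕ, 0 < n ∧ t ^ n * t ^ n = t ^ n := by
  obtain ⟨a, b, hab, h⟩ := Finite.exists_ne_map_eq_of_infinite (fun n : ℕ => t ^ n)
  wlog hlt : a < b generalizing a b
  · exact this b a hab.symm h.symm (by omega)
  set d := b - a with hd
  have hdpos : 0 < d := by omega
  have step : ∀ j, a ≤ j → t ^ (j + d) = t ^ j := by
    intro j hj
    have h1 : j + d = (j - a) + b := by omega
    have h2 : j = (j - a) + a := by omega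
    rw [h1, pow_add, ← h, ← pow_add, ← h2]
  have mult : ∀ k j, a ≤ j → t ^ (j + k * d) = t ^ j := by
    intro k
    induction k with
    | zero => simp
    | succ k ih =>
      intro j hj
      have : j + (k + 1) * d = (j + d) + k * d := by ring
      rw [this, ih _ (by omega), step _ hj]
  refine ⟨(a + 1) * d, by positivity, ?_⟩
  rw [← pow_add]
  exact mult (a + 1) ((a + 1) * d) (by nlinarith)

/-- Key stability lemma: if `s = u * s * t`, then `s = s * t * w` for some `w`. -/
lemma key {S : Type*} [Monoid S] [Finite S] (s u t : S) (h : s = u * s * t) :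
    ∃ w, s = s * t * w := by
  have iter : ∀ n, s = u ^ n * s * t ^ n := by
    intro n
    induction n with
    | zero => simp
    | succ n ih =>
      calc s = u * s * t := h
        _ = u * (u ^ n * s * t ^ n) * t := by rw [← ih]
        _ = u ^ (n + 1) * s * t ^ (n + 1) := by
            rw [pow_succ', pow_succ]; simp only [mul_assoc]
  obtain ⟨n, hn, hidem⟩ := exists_idem_pow t
  have hst : s * t ^ n = s := by
    calc s * t ^ n = u ^ n * s * t ^ n * t ^ n := by rw [← iter n]
      _ = u ^ n * s * (t ^ n * t ^ n) := by rw [mul_assoc]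
      _ = u ^ n * s * t ^ n := by rw [hidem]
      _ = s := (iter n).symm
  obtain ⟨m, rfl⟩ : ∃ m, n = m + 1 := ⟨n - 1, by omega⟩
  refine ⟨t ^ m, ?_⟩
  conv_lhs => rw [← hst]
  rw [pow_succ', ← mul_assoc]

/-- Dual key lemma: if `s = u * s * t`, then `s = w * u * s` for some `w`. -/
lemma key' {S : Type*} [Monoid S] [Finite S] (s u t : S) (h : s = u * s * t) :
    ∃ w, s = w * u * s := by
  haveI : Finite Sᵐᵒᵖ := Finite.of_equiv S MulOpposite.opEquiv
  have h' : MulOpposite.op s =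
      MulOpposite.op t * MulOpposite.op s * MulOpposite.op u := by
    rw [← MulOpposite.op_mul, ← MulOpposite.op_mul]
    exact congrArg MulOpposite.op (h.trans (mul_assoc u s t))
  obtain ⟨w, hw⟩ := key (MulOpposite.op s) (MulOpposite.op t) (MulOpposite.op u) h'
  refine ⟨MulOpposite.unop w, ?_⟩
  have := congrArg MulOpposite.unop hw
  simp only [MulOpposite.unop_mul, MulOpposite.unop_op] at this
  rw [mul_assoc]
  exact this

/-- stability in finite monoids: for `s, x` in a finite monoid `S`,
`S(sx)S = SsS ↔ (sx)S = sS` and `S(xs)S = SsS ↔ S(xs) = Ss`. -/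
theorem stmt1 (S : Type*) [Monoid S] [Finite S] (s x : S) :
    ({y : S | ∃ u v : S, y = u * (s * x) * v} = {y : S | ∃ u v : S, y = u * s * v} ↔
      {y : S | ∃ u : S, y = (s * x) * u} = {y : S | ∃ u : S, y = s * u}) ∧
    ({y : S | ∃ u v : S, y = u * (x * s) * v} = {y : S | ∃ u v : S, y = u * s * v} ↔
      {y : S | ∃ u : S, y = u * (x * s)} = {y : S | ∃ u : S, y = u * s}) := by
  constructor
  · constructor
    · intro hJ
      ext y
      simp only [Set.mem_setOf_eq]
      constructor
      · rintro ⟨u, rfl⟩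
        exact ⟨x * u, by rw [mul_assoc]⟩
      · rintro ⟨u, rfl⟩
        have hs : s ∈ {y : S | ∃ u v : S, y = u * (s * x) * v} := by
          rw [hJ]; exact ⟨1, 1, by simp⟩
        obtain ⟨a, b, hab⟩ := hs
        have hthis : s = a * s * (x * b) := hab.trans (by simp only [mul_assoc])
        obtain ⟨w, hw⟩ := key s a (x * b) hthis
        refine ⟨b * w * u, ?_⟩
        conv_lhs => rw [hw]
        simp only [mul_assoc]
    · intro hR
      ext y
      simp only [Set.mem_setOf_eq]
      constructor
      · rintro ⟨u, v, rfl⟩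
        exact ⟨u, x * v, by simp only [mul_assoc]⟩
      · rintro ⟨u, v, rfl⟩
        have hs : s ∈ {y : S | ∃ u : S, y = (s * x) * u} := by
          rw [hR]; exact ⟨1, by simp⟩
        obtain ⟨a, ha⟩ := hs
        refine ⟨u, a * v, ?_⟩
        conv_lhs => rw [ha]
        simp only [mul_assoc]
  · constructor
    · intro hJ
      ext y
      simp only [Set.mem_setOf_eq]
      constructor
      · rintro ⟨u, rfl⟩
        exact ⟨u * x, by rw [mul_assoc]⟩
      · rintro ⟨u, rfl⟩
        have hs : s ∈ {y : S | ∃ u v : S, y = u * (x * s) * v} := by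
          rw [hJ]; exact ⟨1, 1, by simp⟩
        obtain ⟨a, b, hab⟩ := hs
        have hthis : s = (a * x) * s * b := hab.trans (by simp only [mul_assoc])
        obtain ⟨w, hw⟩ := key' s (a * x) b hthis
        refine ⟨u * w * a, ?_⟩
        conv_lhs => rw [hw]
        simp only [mul_assoc]
    · intro hL
      ext y
      simp only [Set.mem_setOf_eq]
      constructor
      · rintro ⟨u, v, rfl⟩
        exact ⟨u * x, v, by simp only [mul_assoc]⟩
      · rintro ⟨u, v, rfl⟩
        have hs : s ∈ {y : S | ∃ u : S, y = u * (x * s)} := by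
          rw [hL]; exact ⟨1, by simp⟩
        obtain ⟨a, ha⟩ := hs
        refine ⟨u * a, v, ?_⟩
        conv_lhs => rw [ha]
        simp only [mul_assoc]
end

section
/- Let k be a field, A an associative unital k-algebra, e ∈ A an idempotent, and B a unital subalgebra of e·A·e whose identity element is e. Let M be a right B-module and N a right A-module. If Ae = {a·e : a ∈ A} is projective as a right B-module, then for every n ≥ 0 there is an isomorphism Ext^n_A(N, Hom_B(Ae, M)) ≅ Ext^n_B(N·e, M), where Hom_B(Ae, M) is a right A-module via (φ·a)(x) = φ(a·x) and N·e is a right B-module via the B-action inherited from A. -/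
open CategoryTheory MulOpposite ModuleCat

section Infra

variable (k : Type) [Field k] (A : Type) [Ring A] [Algebra k A]
variable (B : Type) [Ring B] [Algebra k B]

/-- The right ideal `eA`, as a `k`-subspace of `A`. -/
noncomputable def eASub (e : A) : Submodule k A := LinearMap.range (LinearMap.mulLeft k e)

/-- The left ideal `Ae`, as a `k`-subspace of `A`. -/
noncomputable def AeSub (e : A) : Submodule k A := LinearMap.range (LinearMap.mulRight k e)

/-- The subspace `N·ε` of a right `A`-module `N`. -/
noncomputable def NeSub (e : A) (N : ModuleCat Aᵐᵒᵖ) : Submodule k N :=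
  Submodule.span k {v : N | ∃ w : N, v = op e • w}

variable {k A B}

theorem op_smul_comm_k (W : ModuleCat Aᵐᵒᵖ) (r : Aᵐᵒᵖ) (c : k) (v : W) :
    r • (c • v) = c • (r • v) := by
  rw [algebra_compatible_smul Aᵐᵒᵖ c v, algebra_compatible_smul Aᵐᵒᵖ c (r • v),
    smul_smul, smul_smul, Algebra.commutes]

theorem smul_e_mem_NeSub {e : A} (a : A) (N : ModuleCat Aᵐᵒᵖ) (v : N) :
    op (a * e) • v ∈ NeSub k A e N := by
  apply Submodule.subset_span
  exact ⟨op a • v, by rw [smul_smul, ← op_mul]⟩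

theorem e_smul_of_mem_NeSub {e : A} (he : e * e = e) (N : ModuleCat Aᵐᵒᵖ) {v : N}
    (hv : v ∈ NeSub k A e N) : op e • v = v := by
  induction hv using Submodule.span_induction with
  | mem w hw => obtain ⟨m, rfl⟩ := hw; rw [smul_smul, ← op_mul, he]
  | zero => rw [smul_zero]
  | add a b _ _ ha hb => rw [smul_add, ha, hb]
  | smul c a _ ha => rw [op_smul_comm_k, ha]

variable (e : A) (he : e * e = e) (ι : B →ₗ[k] A)

theorem iota_mem_corner (hmul : ∀ x y : B, ι (x * y) = ι x * ι y) (hone : ι 1 = e)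
    (b : B) : ι b = e * ι b ∧ ι b = ι b * e := by
  constructor
  · rw [← hone, ← hmul, one_mul]
  · rw [← hone, ← hmul, mul_one]

variable (hmul : ∀ x y : B, ι (x * y) = ι x * ι y) (hone : ι 1 = e)

/-- The right `B`-action on `N·e`, as a ring homomorphism `Bᵐᵒᵖ → End(N·e)`. -/
noncomputable def NeHom (N : ModuleCat Aᵐᵒᵖ) : Bᵐᵒᵖ →+* Module.End k ↥(NeSub k A e N) where
  toFun b :=
    { toFun := fun v => ⟨op (ι (unop b)) • v.1, by
        rw [(iota_mem_corner e ι hmul hone (unop b)).2]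
        exact smul_e_mem_NeSub _ N v.1⟩
      map_add' := fun x y => Subtype.ext (by
        show op _ • ((x : N) + (y : N)) = op _ • (x : N) + op _ • (y : N)
        rw [smul_add])
      map_smul' := fun c x => Subtype.ext (by
        show op _ • ((c • x : ↥(NeSub k A e N)) : N) = c • (op _ • (x : N))
        rw [Submodule.coe_smul, op_smul_comm_k]) }
  map_one' := by
    ext v
    show op (ι 1) • (v : N) = (v : N)
    rw [hone]
    exact e_smul_of_mem_NeSub he N v.2
  map_mul' x y := by
    ext v
    show op (ι (unop y * unop x)) • (v : N)
      = op (ι (unop x)) • (op (ι (unop y)) • (v : N))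
    rw [hmul, smul_smul, ← op_mul]
  map_zero' := by
    ext v
    show op (ι 0) • (v : N) = 0
    rw [map_zero, op_zero, zero_smul]
  map_add' x y := by
    ext v
    show op (ι (unop x + unop y)) • (v : N)
      = op (ι (unop x)) • (v : N) + op (ι (unop y)) • (v : N)
    rw [map_add, MulOpposite.op_add, add_smul]

/-- The right `B`-module structure on `N·e` (restriction along `B ⊆ eAe`). -/
noncomputable def NeModule (N : ModuleCat Aᵐᵒᵖ) : Module Bᵐᵒᵖ ↥(NeSub k A e N) :=
  Module.compHom _ (NeHom e he ι hmul hone N)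

end Infra

section Ae

variable {k : Type} [Field k] {A : Type} [Ring A] [Algebra k A]
variable {B : Type} [Ring B] [Algebra k B]
variable (e : A) (he : e * e = e) (ι : B →ₗ[k] A)
variable (hmul : ∀ x y : B, ι (x * y) = ι x * ι y) (hone : ι 1 = e)

/-- The right `B`-action on `Ae`, as a ring homomorphism `Bᵐᵒᵖ → End(Ae)`. -/
noncomputable def AeHom : Bᵐᵒᵖ →+* Module.End k ↥(AeSub k A e) where
  toFun b :=
    { toFun := fun x => ⟨(x : A) * ι (unop b), by
        refine ⟨(x : A) * ι (unop b), ?_⟩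
        show ((x : A) * ι (unop b)) * e = (x : A) * ι (unop b)
        rw [mul_assoc, ← (iota_mem_corner e ι hmul hone (unop b)).2]⟩
      map_add' := fun x y => Subtype.ext (by
        show ((x : A) + (y : A)) * ι (unop b) = (x : A) * ι (unop b) + (y : A) * ι (unop b)
        rw [add_mul])
      map_smul' := fun c x => Subtype.ext (by
        show (c • (x : A)) * ι (unop b) = c • ((x : A) * ι (unop b))
        rw [smul_mul_assoc]) }
  map_one' := by
    ext x
    show (x : A) * ι 1 = (x : A)
    obtain ⟨c, hc⟩ := x.2
    rw [hone, ← hc]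
    show (LinearMap.mulRight k e c : A) * e = LinearMap.mulRight k e c
    show (c * e) * e = c * e
    rw [mul_assoc, he]
  map_mul' x y := by
    ext v
    show (v : A) * ι (unop y * unop x) = ((v : A) * ι (unop y)) * ι (unop x)
    rw [hmul, mul_assoc]
  map_zero' := by
    ext v
    show (v : A) * ι 0 = 0
    rw [map_zero, mul_zero]
  map_add' x y := by
    ext v
    show (v : A) * ι (unop x + unop y) = (v : A) * ι (unop x) + (v : A) * ι (unop y)
    rw [map_add, mul_add]

/-- The right `B`-module structure on `Ae` (restriction along `B ⊆ eAe`). -/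
noncomputable def AeModule : Module Bᵐᵒᵖ ↥(AeSub k A e) :=
  Module.compHom _ (AeHom e he ι hmul hone)

/-- `SMulCommClass` between the right `B`-action and the `k`-action on a right
`B`-module. -/
def smulCommB (M : ModuleCat Bᵐᵒᵖ) : SMulCommClass Bᵐᵒᵖ k M :=
  ⟨fun r c v => op_smul_comm_k M r c v⟩

/-- Left multiplication by `a : A` on `Ae`, as a map of right `B`-modules. -/
noncomputable def lmulAe (a : A) :
    letI : Module Bᵐᵒᵖ ↥(AeSub k A e) := AeModule e he ι hmul hone
    ↥(AeSub k A e) →ₗ[Bᵐᵒᵖ] ↥(AeSub k A e) :=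
  letI : Module Bᵐᵒᵖ ↥(AeSub k A e) := AeModule e he ι hmul hone
  { toFun := fun x => ⟨a * (x : A), by
      obtain ⟨c, hc⟩ := x.2
      refine ⟨a * c, ?_⟩
      show (a * c) * e = a * (x : A)
      rw [mul_assoc, ← hc, LinearMap.mulRight_apply]⟩
    map_add' := fun x y => Subtype.ext (by
      show a * ((x : A) + (y : A)) = a * (x : A) + a * (y : A)
      rw [mul_add])
    map_smul' := fun b x => Subtype.ext (by
      show a * ((x : A) * ι (unop b)) = (a * (x : A)) * ι (unop b)
      rw [mul_assoc]) }

/-- The right `A`-module structure on `Hom_B(Ae, M)`, given by `(φ·a)(x) = φ(a·x)`. -/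
noncomputable def homAModule (M : ModuleCat Bᵐᵒᵖ) :
    letI : Module Bᵐᵒᵖ ↥(AeSub k A e) := AeModule e he ι hmul hone
    letI : SMulCommClass Bᵐᵒᵖ k M := smulCommB M
    Module Aᵐᵒᵖ (↥(AeSub k A e) →ₗ[Bᵐᵒᵖ] ↥M) :=
  letI : Module Bᵐᵒᵖ ↥(AeSub k A e) := AeModule e he ι hmul hone
  letI : SMulCommClass Bᵐᵒᵖ k M := smulCommB M
  Module.compHom _
    ({ toFun := fun a =>
        { toFun := fun φ => φ.comp (lmulAe e he ι hmul hone (unop a))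
          map_add' := fun φ ψ => LinearMap.add_comp _ _ _
          map_smul' := fun c φ => LinearMap.smul_comp _ _ _ }
       map_one' := by
         ext φ x
         exact congrArg φ (Subtype.ext (one_mul (x : A)))
       map_mul' := fun a b => by
         ext φ x
         exact congrArg φ (Subtype.ext (mul_assoc (unop b) (unop a) (x : A)))
       map_zero' := by
         ext φ x
         show φ ⟨(0 : A) * (x : A), _⟩ = 0
         rw [show (⟨(0 : A) * (x : A), _⟩ : ↥(AeSub k A e))
            = (0 : ↥(AeSub k A e)) from Subtype.ext (zero_mul (x : A)), map_zero]
       map_add' := fun a b => by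
         ext φ x
         show φ ⟨(unop a + unop b) * (x : A), _⟩ = φ ⟨unop a * (x : A), _⟩ + φ ⟨unop b * (x : A), _⟩
         rw [show (⟨(unop a + unop b) * (x : A), _⟩ : ↥(AeSub k A e))
            = (⟨unop a * (x : A), _⟩ : ↥(AeSub k A e)) + ⟨unop b * (x : A), _⟩
            from Subtype.ext (add_mul (unop a) (unop b) (x : A)), map_add]
       } : Aᵐᵒᵖ →+* Module.End k (↥(AeSub k A e) →ₗ[Bᵐᵒᵖ] ↥M))

end Ae

section ES

variable {k : Type} [Field k] {A : Type} [Ring A] [Algebra k A]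
variable {B : Type} [Ring B] [Algebra k B]
variable (e : A) (he : e * e = e) (ι : B →ₗ[k] A)
variable (hmul : ∀ x y : B, ι (x * y) = ι x * ι y) (hone : ι 1 = e)

/-- The object map of the functor `N ↦ N·e`. -/
noncomputable def Fobj (X : ModuleCat Aᵐᵒᵖ) : ModuleCat Bᵐᵒᵖ :=
  letI : Module Bᵐᵒᵖ ↥(NeSub k A e X) := NeModule e he ι hmul hone X
  ModuleCat.of Bᵐᵒᵖ ↥(NeSub k A e X)

theorem map_mem_NeSub {X Y : ModuleCat Aᵐᵒᵖ} (f : X ⟶ Y) {v : X}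
    (hv : v ∈ NeSub k A e X) : f v ∈ NeSub k A e Y := by
  induction hv using Submodule.span_induction with
  | mem w hw =>
    obtain ⟨m, rfl⟩ := hw
    exact Submodule.subset_span ⟨f m, by rw [map_smul]⟩
  | zero => rw [map_zero]; exact zero_mem _
  | add a b _ _ ha hb => rw [map_add]; exact add_mem ha hb
  | smul c a _ ha =>
    have hc : f (c • a) = c • f a := by
      rw [algebra_compatible_smul Aᵐᵒᵖ c a, map_smul, ← algebra_compatible_smul]
    rw [hc]
    exact Submodule.smul_mem _ c ha

/-- The morphism map of the functor `N ↦ N·e`. -/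
noncomputable def Fmap {X Y : ModuleCat Aᵐᵒᵖ} (f : X ⟶ Y) :
    Fobj e he ι hmul hone X ⟶ Fobj e he ι hmul hone Y :=
  letI : Module Bᵐᵒᵖ ↥(NeSub k A e X) := NeModule e he ι hmul hone X
  letI : Module Bᵐᵒᵖ ↥(NeSub k A e Y) := NeModule e he ι hmul hone Y
  ModuleCat.ofHom
  { toFun := fun v => ⟨f v.1, map_mem_NeSub e f v.2⟩
    map_add' := fun x y => Subtype.ext (map_add f.hom x.1 y.1)
    map_smul' := fun b v => Subtype.ext (by
      show f (op (ι (unop b)) • v.1) = op (ι (unop b)) • f v.1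
      exact map_smul f.hom _ _) }

/-- The functor `N ↦ N·e` from right `A`-modules to right `B`-modules. -/
noncomputable def Ffun : ModuleCat Aᵐᵒᵖ ⥤ ModuleCat Bᵐᵒᵖ where
  obj := Fobj e he ι hmul hone
  map := Fmap e he ι hmul hone
  map_id X := by refine ModuleCat.hom_ext (LinearMap.ext fun v => ?_); rfl
  map_comp f g := by refine ModuleCat.hom_ext (LinearMap.ext fun v => ?_); rfl

theorem Ffun_additive : (Ffun e he ι hmul hone).Additive :=
  ⟨by intros; refine ModuleCat.hom_ext (LinearMap.ext fun v => ?_); rfl⟩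

theorem Ffun_presHom :
    letI := Ffun_additive e he ι hmul hone
    (Ffun e he ι hmul hone).PreservesHomology := by
  letI := Ffun_additive e he ι hmul hone
  apply Functor.preservesHomology_of_map_exact
  intro S hS
  rw [ShortComplex.moduleCat_exact_iff] at hS ⊢
  intro v hv
  have hg : S.g v.1 = 0 := congrArg Subtype.val hv
  obtain ⟨w, hw⟩ := hS v.1 hg
  refine ⟨⟨op e • w, Submodule.subset_span ⟨w, rfl⟩⟩, ?_⟩
  apply Subtype.ext
  show S.f (op e • w) = v.1
  rw [map_smul, hw]
  exact e_smul_of_mem_NeSub he _ v.2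

/-- The object map of the coinduction functor `M ↦ Hom_B(Ae, M)`. -/
noncomputable def Gobj (Y : ModuleCat Bᵐᵒᵖ) : ModuleCat Aᵐᵒᵖ :=
  letI : Module Bᵐᵒᵖ ↥(AeSub k A e) := AeModule e he ι hmul hone
  letI : SMulCommClass Bᵐᵒᵖ k Y := smulCommB Y
  letI : Module Aᵐᵒᵖ (↥(AeSub k A e) →ₗ[Bᵐᵒᵖ] ↥Y) := homAModule e he ι hmul hone Y
  ModuleCat.of Aᵐᵒᵖ (↥(AeSub k A e) →ₗ[Bᵐᵒᵖ] ↥Y)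

/-- The morphism map of the coinduction functor. -/
noncomputable def Gmap {Y Z : ModuleCat Bᵐᵒᵖ} (q : Y ⟶ Z) :
    Gobj e he ι hmul hone Y ⟶ Gobj e he ι hmul hone Z :=
  letI : Module Bᵐᵒᵖ ↥(AeSub k A e) := AeModule e he ι hmul hone
  letI : SMulCommClass Bᵐᵒᵖ k Y := smulCommB Y
  letI : SMulCommClass Bᵐᵒᵖ k Z := smulCommB Z
  letI : Module Aᵐᵒᵖ (↥(AeSub k A e) →ₗ[Bᵐᵒᵖ] ↥Y) := homAModule e he ι hmul hone Y
  letI : Module Aᵐᵒᵖ (↥(AeSub k A e) →ₗ[Bᵐᵒᵖ] ↥Z) := homAModule e he ι hmul hone Z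
  ModuleCat.ofHom
  { toFun := fun φ => q.hom.comp φ
    map_add' := fun φ ψ => by
      refine LinearMap.ext fun x => ?_
      exact map_add q.hom _ _
    map_smul' := fun a φ => by
      refine LinearMap.ext fun x => ?_
      rfl }

/-- The element `e` of `Ae`. -/
noncomputable def ePt : ↥(AeSub k A e) :=
  ⟨e, ⟨e, by rw [LinearMap.mulRight_apply]; exact he⟩⟩

/-- Apply an element of `Gobj Y` as a `B`-linear map. -/
noncomputable def Gapp {Y : ModuleCat Bᵐᵒᵖ} (φ : Gobj e he ι hmul hone Y) :
    letI : Module Bᵐᵒᵖ ↥(AeSub k A e) := AeModule e he ι hmul hone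
    ↥(AeSub k A e) →ₗ[Bᵐᵒᵖ] ↥Y := φ

/-- One direction of the adjunction: `Hom_A(X, Hom_B(Ae,Y)) → Hom_B(Xe, Y)`. -/
noncomputable def Phi {X : ModuleCat Aᵐᵒᵖ} {Y : ModuleCat Bᵐᵒᵖ}
    (f : X ⟶ Gobj e he ι hmul hone Y) : ((Ffun e he ι hmul hone).obj X ⟶ Y) :=
  letI : Module Bᵐᵒᵖ ↥(NeSub k A e X) := NeModule e he ι hmul hone X
  letI : Module Bᵐᵒᵖ ↥(AeSub k A e) := AeModule e he ι hmul hone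
  ModuleCat.ofHom
  { toFun := fun v => Gapp e he ι hmul hone (f v.1) (ePt e he)
    map_add' := fun u w => by
      show Gapp e he ι hmul hone (f (u.1 + w.1)) (ePt e he)
        = Gapp e he ι hmul hone (f u.1) (ePt e he)
          + Gapp e he ι hmul hone (f w.1) (ePt e he)
      rw [map_add f.hom]
      rfl
    map_smul' := fun b v => by
      show Gapp e he ι hmul hone (f (op (ι (unop b)) • v.1)) (ePt e he)
        = b • (Gapp e he ι hmul hone (f v.1) (ePt e he))
      rw [map_smul f.hom]
      show Gapp e he ι hmul hone (f v.1)
          (lmulAe e he ι hmul hone (ι (unop b)) (ePt e he))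
        = b • (Gapp e he ι hmul hone (f v.1) (ePt e he))
      rw [← map_smul (Gapp e he ι hmul hone (f v.1)) b (ePt e he)]
      refine congrArg (fun z => Gapp e he ι hmul hone (f v.1) z) (Subtype.ext ?_)
      show ι (unop b) * e = e * ι (unop b)
      rw [← (iota_mem_corner e ι hmul hone (unop b)).2,
        ← (iota_mem_corner e ι hmul hone (unop b)).1] }

/-- The other direction of the adjunction: `Hom_B(Xe, Y) → Hom_A(X, Hom_B(Ae,Y))`. -/
noncomputable def Psi {X : ModuleCat Aᵐᵒᵖ} {Y : ModuleCat Bᵐᵒᵖ}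
    (g : ((Ffun e he ι hmul hone).obj X ⟶ Y)) : X ⟶ Gobj e he ι hmul hone Y :=
  letI : Module Bᵐᵒᵖ ↥(NeSub k A e X) := NeModule e he ι hmul hone X
  letI : Module Bᵐᵒᵖ ↥(AeSub k A e) := AeModule e he ι hmul hone
  letI : SMulCommClass Bᵐᵒᵖ k Y := smulCommB Y
  letI : Module Aᵐᵒᵖ (↥(AeSub k A e) →ₗ[Bᵐᵒᵖ] ↥Y) := homAModule e he ι hmul hone Y
  ModuleCat.ofHom
  { toFun := fun v =>
      { toFun := fun x => g ⟨op x.1 • v, by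
          obtain ⟨c, hc⟩ := x.2
          have hx : x.1 = c * e := by rw [← hc]; rfl
          rw [hx]
          exact smul_e_mem_NeSub c X v⟩
        map_add' := fun x y => by
          refine (congrArg (fun z => g z) (Subtype.ext ?_)).trans (map_add (ConcreteCategory.hom g) _ _)
          show op (x.1 + y.1) • v = op x.1 • v + op y.1 • v
          rw [MulOpposite.op_add, add_smul]
        map_smul' := fun b x => by
          show g ⟨op (x.1 * ι (unop b)) • v, _⟩ = b • g ⟨op x.1 • v, _⟩
          refine (congrArg (fun z => g z) (Subtype.ext ?_)).trans (map_smul (ConcreteCategory.hom g) b _)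
          show op (x.1 * ι (unop b)) • v = op (ι (unop b)) • (op x.1 • v)
          rw [smul_smul, ← op_mul] }
    map_add' := fun u w => by
      refine LinearMap.ext fun x => ?_
      show g ⟨op x.1 • (u + w), _⟩ = g ⟨op x.1 • u, _⟩ + g ⟨op x.1 • w, _⟩
      refine (congrArg (fun z => g z) (Subtype.ext ?_)).trans (map_add (ConcreteCategory.hom g) _ _)
      show op x.1 • (u + w) = op x.1 • u + op x.1 • w
      rw [smul_add]
    map_smul' := fun a v => by
      refine LinearMap.ext fun x => ?_
      show g ⟨op x.1 • (a • v), _⟩ = g ⟨op (unop a * x.1) • v, _⟩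
      refine congrArg (fun z => g z) (Subtype.ext ?_)
      show op x.1 • (a • v) = op (unop a * x.1) • v
      rw [smul_smul, ← op_unop a, ← op_mul]
      rfl }

theorem Phi_Psi {X : ModuleCat Aᵐᵒᵖ} {Y : ModuleCat Bᵐᵒᵖ}
    (g : ((Ffun e he ι hmul hone).obj X ⟶ Y)) :
    Phi e he ι hmul hone (Psi e he ι hmul hone g) = g := by
  refine ModuleCat.hom_ext (LinearMap.ext fun v => ?_)
  exact congrArg (fun z => g z) (Subtype.ext (e_smul_of_mem_NeSub he X v.2))

theorem Psi_Phi {X : ModuleCat Aᵐᵒᵖ} {Y : ModuleCat Bᵐᵒᵖ}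
    (f : X ⟶ Gobj e he ι hmul hone Y) :
    Psi e he ι hmul hone (Phi e he ι hmul hone f) = f := by
  letI : Module Bᵐᵒᵖ ↥(AeSub k A e) := AeModule e he ι hmul hone
  refine ModuleCat.hom_ext (LinearMap.ext fun v => ?_)
  refine LinearMap.ext fun x => ?_
  have hx : x.1 * e = x.1 := by
    obtain ⟨c, hc⟩ := x.2
    have h1 : x.1 = c * e := by rw [← hc]; rfl
    rw [h1, mul_assoc, he]
  show Gapp e he ι hmul hone (f (op x.1 • v)) (ePt e he)
    = Gapp e he ι hmul hone (f v) x
  rw [map_smul f.hom]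
  show Gapp e he ι hmul hone (f v) (lmulAe e he ι hmul hone x.1 (ePt e he))
    = Gapp e he ι hmul hone (f v) x
  exact congrArg (fun z => Gapp e he ι hmul hone (f v) z) (Subtype.ext hx)

theorem Phi_nat_left {X' X : ModuleCat Aᵐᵒᵖ} {Y : ModuleCat Bᵐᵒᵖ}
    (h : X' ⟶ X) (f : X ⟶ Gobj e he ι hmul hone Y) :
    Phi e he ι hmul hone (h ≫ f)
      = (Ffun e he ι hmul hone).map h ≫ Phi e he ι hmul hone f := by
  refine ModuleCat.hom_ext (LinearMap.ext fun v => ?_); rfl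

theorem Phi_nat_right {X : ModuleCat Aᵐᵒᵖ} {Y Z : ModuleCat Bᵐᵒᵖ}
    (f : X ⟶ Gobj e he ι hmul hone Y) (q : Y ⟶ Z) :
    Phi e he ι hmul hone (f ≫ Gmap e he ι hmul hone q)
      = Phi e he ι hmul hone f ≫ q := by
  refine ModuleCat.hom_ext (LinearMap.ext fun v => ?_); rfl

theorem Phi_add {X : ModuleCat Aᵐᵒᵖ} {Y : ModuleCat Bᵐᵒᵖ}
    (f f' : X ⟶ Gobj e he ι hmul hone Y) :
    Phi e he ι hmul hone (f + f')
      = Phi e he ι hmul hone f + Phi e he ι hmul hone f' := by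
  refine ModuleCat.hom_ext (LinearMap.ext fun v => ?_); rfl

theorem Phi_smul {X : ModuleCat Aᵐᵒᵖ} {Y : ModuleCat Bᵐᵒᵖ}
    (c : k) (f : X ⟶ Gobj e he ι hmul hone Y) :
    Phi e he ι hmul hone (c • f) = c • Phi e he ι hmul hone f := by
  letI : Module Bᵐᵒᵖ ↥(AeSub k A e) := AeModule e he ι hmul hone
  refine ModuleCat.hom_ext (LinearMap.ext fun v => ?_)
  show Gapp e he ι hmul hone (f v.1)
      (lmulAe e he ι hmul hone (unop (algebraMap k Aᵐᵒᵖ c)) (ePt e he))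
    = algebraMap k Bᵐᵒᵖ c • (Gapp e he ι hmul hone (f v.1) (ePt e he))
  rw [← map_smul (Gapp e he ι hmul hone (f v.1)) (algebraMap k Bᵐᵒᵖ c) (ePt e he)]
  refine congrArg (fun z => Gapp e he ι hmul hone (f v.1) z) (Subtype.ext ?_)
  show unop (algebraMap k Aᵐᵒᵖ c) * e = e * ι (unop (algebraMap k Bᵐᵒᵖ c))
  have h1 : unop (algebraMap k Aᵐᵒᵖ c) = algebraMap k A c := by
    rw [MulOpposite.algebraMap_apply, unop_op]
  have h2 : unop (algebraMap k Bᵐᵒᵖ c) = algebraMap k B c := by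
    rw [MulOpposite.algebraMap_apply, unop_op]
  have h3 : ι (algebraMap k B c) = c • e := by
    rw [Algebra.algebraMap_eq_smul_one, map_smul, hone]
  rw [h1, h2, h3, mul_smul_comm, he, Algebra.smul_def]

/-- The adjunction hom-equivalence, as a `k`-linear equivalence. -/
noncomputable def PhiEquiv (X : ModuleCat Aᵐᵒᵖ) (Y : ModuleCat Bᵐᵒᵖ) :
    (X ⟶ Gobj e he ι hmul hone Y) ≃ₗ[k] (((Ffun e he ι hmul hone).obj X ⟶ Y)) where
  toFun := Phi e he ι hmul hone
  invFun := Psi e he ι hmul hone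
  left_inv := Psi_Phi e he ι hmul hone
  right_inv := Phi_Psi e he ι hmul hone
  map_add' := Phi_add e he ι hmul hone
  map_smul' := Phi_smul e he ι hmul hone

/-- `F` preserves projective objects. -/
theorem Ffun_proj (hAe :
      letI : Module Bᵐᵒᵖ ↥(AeSub k A e) := AeModule e he ι hmul hone
      Module.Projective Bᵐᵒᵖ ↥(AeSub k A e))
    (X : ModuleCat Aᵐᵒᵖ) [Projective X] :
    Projective ((Ffun e he ι hmul hone).obj X) := by
  letI : Module Bᵐᵒᵖ ↥(AeSub k A e) := AeModule e he ι hmul hone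
  constructor
  intro Z Y g q hq
  haveI : Epi (Gmap e he ι hmul hone q) := by
    rw [ModuleCat.epi_iff_surjective]
    intro ψ
    obtain ⟨φ, hφ⟩ := Module.projective_lifting_property
      (show (↑Z →ₗ[Bᵐᵒᵖ] ↑Y) from q.hom) ψ ((ModuleCat.epi_iff_surjective q).1 hq)
    exact ⟨φ, hφ⟩
  refine ⟨Phi e he ι hmul hone
    (Projective.factorThru (Psi e he ι hmul hone g) (Gmap e he ι hmul hone q)), ?_⟩
  rw [← Phi_nat_right, Projective.factorThru_comp, Phi_Psi]

/-- `F` maps a projective resolution of `N` to a projective resolution of `N·e`. -/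
noncomputable def QRes (hAe :
      letI : Module Bᵐᵒᵖ ↥(AeSub k A e) := AeModule e he ι hmul hone
      Module.Projective Bᵐᵒᵖ ↥(AeSub k A e))
    {N : ModuleCat Aᵐᵒᵖ} (P : ProjectiveResolution N) :
    ProjectiveResolution (Fobj e he ι hmul hone N) :=
  haveI := Ffun_additive e he ι hmul hone
  haveI := Ffun_presHom e he ι hmul hone
  { complex := ((Ffun e he ι hmul hone).mapHomologicalComplex _).obj P.complex
    projective := fun n => Ffun_proj e he ι hmul hone hAe (P.complex.X n)
    π := ((Ffun e he ι hmul hone).mapHomologicalComplex _).map P.π ≫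
      (HomologicalComplex.singleMapHomologicalComplex
        (Ffun e he ι hmul hone) (ComplexShape.down ℕ) 0).hom.app N
    quasiIso := by
      haveI := P.quasiIso
      haveI : IsIso ((HomologicalComplex.singleMapHomologicalComplex
        (Ffun e he ι hmul hone) (ComplexShape.down ℕ) 0).hom.app N) := inferInstance
      haveI h3 : QuasiIso ((HomologicalComplex.singleMapHomologicalComplex
        (Ffun e he ι hmul hone) (ComplexShape.down ℕ) 0).hom.app N) := inferInstance
      exact quasiIso_comp (hφ' := h3) _ _ }

end ES

/-- Eckmann–Shapiro, coinduction: let `B` be a unital subalgebra of `eAe`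
with identity `e` (realized by the injective multiplicative unit-preserving `k`-linear
map `ι : B → A` with `ι 1 = e`), `M` a right `B`-module and `N` a right `A`-module.
If `Ae` is projective as a right `B`-module, then for all `n ≥ 0`,
`Ext^n_A(N, Hom_B(Ae, M)) ≅ Ext^n_B(N·e, M)`, where `Hom_B(Ae, M)` carries the right
`A`-action `(φ·a)(x) = φ(a·x)`. -/
theorem stmt7 (k A B : Type) [Field k] [Ring A] [Algebra k A] [Ring B] [Algebra k B]
    (e : A) (he : e * e = e)
    (ι : B →ₗ[k] A) (hmul : ∀ x y : B, ι (x * y) = ι x * ι y) (hone : ι 1 = e)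
    (hinj : Function.Injective ι)
    (M : ModuleCat Bᵐᵒᵖ) (N : ModuleCat Aᵐᵒᵖ) (n : ℕ) :
    letI : Module Bᵐᵒᵖ ↥(AeSub k A e) := AeModule e he ι hmul hone
    letI : SMulCommClass Bᵐᵒᵖ k M := smulCommB M
    letI : Module Aᵐᵒᵖ (↥(AeSub k A e) →ₗ[Bᵐᵒᵖ] ↥M) := homAModule e he ι hmul hone M
    letI : Module Bᵐᵒᵖ ↥(NeSub k A e N) := NeModule e he ι hmul hone N
    Module.Projective Bᵐᵒᵖ ↥(AeSub k A e) →
    Nonempty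
      ((((Ext k (ModuleCat Aᵐᵒᵖ) n).obj (Opposite.op N)).obj
          (ModuleCat.of Aᵐᵒᵖ (↥(AeSub k A e) →ₗ[Bᵐᵒᵖ] ↥M))) ≅
        (((Ext k (ModuleCat Bᵐᵒᵖ) n).obj
            (Opposite.op (ModuleCat.of Bᵐᵒᵖ ↥(NeSub k A e N)))).obj M)) := by
  intro hAe
  haveI := Ffun_additive e he ι hmul hone
  haveI := Ffun_presHom e he ι hmul hone
  obtain ⟨P⟩ : Nonempty (ProjectiveResolution N) := HasProjectiveResolution.out
  let Q := QRes e he ι hmul hone hAe P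
  let cIso : P.complex.linearYonedaObj k (Gobj e he ι hmul hone M)
      ≅ Q.complex.linearYonedaObj k M :=
    HomologicalComplex.Hom.isoOfComponents
      (fun i => (PhiEquiv e he ι hmul hone (P.complex.X i) M).toModuleIso)
      (fun i j hij => by
        refine ModuleCat.hom_ext (LinearMap.ext fun φ => ?_)
        exact (Phi_nat_left e he ι hmul hone (P.complex.d j i) φ).symm)
  exact ⟨P.isoExt n (Gobj e he ι hmul hone M) ≪≫
    (HomologicalComplex.homologyFunctor (ModuleCat k) _ n).mapIso cIso ≪≫
    (Q.isoExt n M).symm⟩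
end

section
/- Let S be a finite regular monoid, k a field, and let M and N be simple right kS-modules having apexes at idempotents e and f of S, respectively. If neither SeS ⊆ SfS nor SfS ⊆ SeS (the apexes are incomparable in the J-order), then Ext¹_{kS}(M, N) = 0. -/
open CategoryTheory MulOpposite

universe u v

theorem stmt8_gen {R : Type u} {V : Type v} [Ring R] [AddCommGroup V] [Module R V]
    (hs : IsSimpleModule R V) (v₀ : V) (hv₀ : v₀ ≠ 0) (v : V) : ∃ r : R, v = r • v₀ := by
  haveI := hs
  have h1 : Submodule.span R {v₀} = ⊤ := by
    rcases eq_bot_or_eq_top (Submodule.span R {v₀}) with h | h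
    · exact absurd (Submodule.span_singleton_eq_bot.mp h) hv₀
    · exact h
  have h2 : v ∈ Submodule.span R {v₀} := h1 ▸ Submodule.mem_top
  obtain ⟨r, hr⟩ := Submodule.mem_span_singleton.mp h2
  exact ⟨r, hr.symm⟩

open MonoidAlgebra in
theorem stmt8_core {k : Type} [Field k] {S : Type} [Monoid S]
    (hreg : ∀ s : S, ∃ t : S, s * t * s = s)
    (e f : S) (he : e * e = e) (hf : f * f = f)
    {Mm Nn P0 P1 : Type u} [AddCommGroup Mm] [Module (MonoidAlgebra k S)ᵐᵒᵖ Mm]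
    [AddCommGroup Nn] [Module (MonoidAlgebra k S)ᵐᵒᵖ Nn]
    [AddCommGroup P0] [Module (MonoidAlgebra k S)ᵐᵒᵖ P0]
    [AddCommGroup P1] [Module (MonoidAlgebra k S)ᵐᵒᵖ P1]
    (hMs : IsSimpleModule (MonoidAlgebra k S)ᵐᵒᵖ Mm)
    (hNs : IsSimpleModule (MonoidAlgebra k S)ᵐᵒᵖ Nn)
    (hMe : ∃ m : Mm, (op (single e (1:k)) : (MonoidAlgebra k S)ᵐᵒᵖ) • m ≠ 0)
    (hMf : ∀ m : Mm, (op (single f (1:k)) : (MonoidAlgebra k S)ᵐᵒᵖ) • m = 0)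
    (hNf : ∃ n : Nn, (op (single f (1:k)) : (MonoidAlgebra k S)ᵐᵒᵖ) • n ≠ 0)
    (hNe : ∀ n : Nn, (op (single e (1:k)) : (MonoidAlgebra k S)ᵐᵒᵖ) • n = 0)
    (d : P1 →ₗ[(MonoidAlgebra k S)ᵐᵒᵖ] P0) (π : P0 →ₗ[(MonoidAlgebra k S)ᵐᵒᵖ] Mm)
    (hπ : Function.Surjective π)
    (hd : LinearMap.range d = LinearMap.ker π)
    (φ : P1 →ₗ[(MonoidAlgebra k S)ᵐᵒᵖ] Nn) (hφ : LinearMap.ker d ≤ LinearMap.ker φ) :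
    ∃ ψ : P0 →ₗ[(MonoidAlgebra k S)ᵐᵒᵖ] Nn, ψ.comp d = φ := by
  classical
  set R := (MonoidAlgebra k S)ᵐᵒᵖ with hR
  -- elements of the ideal SeS kill Nn; elements of SfS kill Mm
  have hNkill : ∀ (u v : S) (c : k) (n : Nn), (op (single (u*e*v) c) : R) • n = 0 := by
    intro u v c n
    have h1 : (single (u*e*v) c : MonoidAlgebra k S)
        = single u (1:k) * single e (1:k) * single v c := by
      simp [MonoidAlgebra.single_mul_single]
    rw [h1, op_mul, op_mul, mul_smul, mul_smul, hNe, smul_zero]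
  have hMkill : ∀ (u v : S) (c : k) (m : Mm), (op (single (u*f*v) c) : R) • m = 0 := by
    intro u v c m
    have h1 : (single (u*f*v) c : MonoidAlgebra k S)
        = single u (1:k) * single f (1:k) * single v c := by
      simp [MonoidAlgebra.single_mul_single]
    rw [h1, op_mul, op_mul, mul_smul, mul_smul, hMf, smul_zero]
  obtain ⟨m', hm'⟩ := hMe
  set ε : R := op (single e (1:k)) with hεdef
  set fop : R := op (single f (1:k)) with hfopdef
  have hεε : ε * ε = ε := by
    rw [hεdef, ← op_mul, MonoidAlgebra.single_mul_single, he, one_mul]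
  have hff : fop * fop = fop := by
    rw [hfopdef, ← op_mul, MonoidAlgebra.single_mul_single, hf, one_mul]
  set m₀ : Mm := ε • m' with hm₀def
  have hm₀ : m₀ ≠ 0 := hm'
  have hεm₀ : ε • m₀ = m₀ := by rw [hm₀def, smul_smul, hεε]
  obtain ⟨p₀', hp₀'⟩ := hπ m₀
  set p₀ : P0 := ε • p₀' with hp₀def
  have hπp₀ : π p₀ = m₀ := by rw [hp₀def, map_smul, hp₀', hεm₀]
  have hεp₀ : ε • p₀ = p₀ := by rw [hp₀def, smul_smul, hεε]
  -- the factorization ξ of φ through ker π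
  let eqv1 : (P1 ⧸ LinearMap.ker d) ≃ₗ[R] LinearMap.range d := LinearMap.quotKerEquivRange d
  let eqv2 : (LinearMap.range d) ≃ₗ[R] (LinearMap.ker π : Submodule R P0) :=
    LinearEquiv.ofEq _ _ hd
  let ξ : (LinearMap.ker π : Submodule R P0) →ₗ[R] Nn :=
    (Submodule.liftQ _ φ hφ) ∘ₗ eqv1.symm.toLinearMap ∘ₗ eqv2.symm.toLinearMap
  have hξ : ∀ (x : P1) (h : d x ∈ LinearMap.ker π), ξ ⟨d x, h⟩ = φ x := by
    intro x h
    have h1 : eqv2.symm ⟨d x, h⟩ = ⟨d x, LinearMap.mem_range_self d x⟩ := by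
      apply Subtype.ext; rfl
    have h2 : eqv1.symm ⟨d x, LinearMap.mem_range_self d x⟩ = Submodule.Quotient.mk x := by
      apply eqv1.injective
      rw [LinearEquiv.apply_symm_apply]
      apply Subtype.ext
      exact (LinearMap.quotKerEquivRange_apply_mk d x).symm ▸ rfl
    show Submodule.liftQ _ φ hφ (eqv1.symm (eqv2.symm ⟨d x, h⟩)) = φ x
    rw [h1, h2, Submodule.liftQ_apply]
  -- membership lemma
  have hmemz : ∀ c₀ : MonoidAlgebra k S,
      (op (single e (1:k) * c₀ * single f (1:k)) : R) • p₀ ∈ LinearMap.ker π := by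
    intro c₀
    rw [LinearMap.mem_ker, map_smul, hπp₀, op_mul, mul_smul, hMf]
  -- step 2 : ξ vanishes on (op (single e * c₀ * single f)) • p₀
  have hstep2 : ∀ (c₀ : MonoidAlgebra k S)
      (h : (op (single e (1:k) * c₀ * single f (1:k)) : R) • p₀ ∈ LinearMap.ker π),
      ξ ⟨(op (single e (1:k) * c₀ * single f (1:k)) : R) • p₀, h⟩ = 0 := by
    intro c₀
    induction c₀ using MonoidAlgebra.induction_linear with
    | zero =>
      intro h
      have h1 : (⟨_, h⟩ : LinearMap.ker π) = 0 := by
        apply Subtype.ext; simp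
      rw [h1, map_zero]
    | add c c' ih ih' =>
      intro h
      have h1 : (⟨_, h⟩ : LinearMap.ker π) = ⟨_, hmemz c⟩ + ⟨_, hmemz c'⟩ := by
        apply Subtype.ext
        simp only [Submodule.coe_add, mul_add, add_mul, MulOpposite.op_add, add_smul]
      rw [h1, map_add, ih _, ih' _, add_zero]
    | single w c =>
      intro h
      obtain ⟨t, ht⟩ := hreg (e*w*f)
      have hz : (single e (1:k) * single w c * single f (1:k))
          = single (e*w*f) c := by
        simp [MonoidAlgebra.single_mul_single]
      have hmul : (op (single (t*(e*w*f)) (1:k)) : R)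
          * op (single e (1:k) * single w c * single f (1:k))
          = op (single e (1:k) * single w c * single f (1:k)) := by
        rw [hz, ← op_mul, MonoidAlgebra.single_mul_single, mul_one, ← mul_assoc, ht]
      have hη : ∀ n : Nn, (op (single (t*(e*w*f)) (1:k)) : R) • n = 0 := by
        intro n
        have hrw : t*(e*w*f) = t*e*(w*f) := by simp [mul_assoc]
        rw [hrw]; exact hNkill t (w*f) 1 n
      have h2 : (op (single (t*(e*w*f)) (1:k)) : R) • (⟨_, h⟩ : LinearMap.ker π) = ⟨_, h⟩ := by
        apply Subtype.ext
        rw [SetLike.val_smul, smul_smul, hmul]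
      calc ξ ⟨_, h⟩ = ξ ((op (single (t*(e*w*f)) (1:k)) : R) • ⟨_, h⟩) := by rw [h2]
        _ = (op (single (t*(e*w*f)) (1:k)) : R) • ξ ⟨_, h⟩ := map_smul ξ _ _
        _ = 0 := hη _
  -- Claim A
  have claimA : ∀ (r : R), r • m₀ = 0 → ∀ (h : r • p₀ ∈ LinearMap.ker π),
      ξ ⟨r • p₀, h⟩ = 0 := by
    intro r hr h
    by_contra hne
    obtain ⟨n', hn'⟩ := hNf
    obtain ⟨c, hc⟩ := stmt8_gen hNs _ hne (fop • n')
    apply hn'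
    have h3 : fop • n' = (fop * c) • ξ ⟨r • p₀, h⟩ := by
      conv_lhs => rw [show fop • n' = fop • (fop • n') from by rw [smul_smul, hff], hc, smul_smul]
    have h5 : ((fop * c) • (⟨r • p₀, h⟩ : LinearMap.ker π))
        = (⟨_, hmemz (unop (c * r))⟩ : LinearMap.ker π) := by
      apply Subtype.ext
      rw [SetLike.val_smul]
      show (fop * c) • (r • p₀) = (op (single e (1:k) * unop (c*r) * single f (1:k)) : R) • p₀
      conv_lhs => rw [← hεp₀]
      rw [smul_smul, smul_smul]
      congr 1
      rw [op_mul, op_mul, op_unop, hεdef, hfopdef]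
      simp only [mul_assoc]
    rw [h3, ← map_smul, h5, hstep2 _ _]
  -- construction of the extension Ξ
  let β : (R × LinearMap.ker π) →ₗ[R] P0 :=
    LinearMap.coprod (LinearMap.toSpanSingleton R P0 p₀) (LinearMap.ker π).subtype
  have hβapp : ∀ (r : R) (κ : LinearMap.ker π), β (r, κ) = r • p₀ + (κ : P0) := by
    intro r κ; rfl
  have hβ : Function.Surjective β := by
    intro p
    obtain ⟨r, hrp⟩ := stmt8_gen hMs m₀ hm₀ (π p)
    refine ⟨(r, ⟨p - r • p₀, ?_⟩), ?_⟩
    · rw [LinearMap.mem_ker, map_sub, map_smul, hπp₀, hrp, sub_self]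
    · rw [hβapp, add_comm, sub_add_cancel]
  let γ : (R × LinearMap.ker π) →ₗ[R] Nn := ξ ∘ₗ LinearMap.snd R R (LinearMap.ker π)
  have hγapp : ∀ (r : R) (κ : LinearMap.ker π), γ (r, κ) = ξ κ := by intro r κ; rfl
  have hkerβγ : LinearMap.ker β ≤ LinearMap.ker γ := by
    rintro ⟨r, κ⟩ hk
    rw [LinearMap.mem_ker, hβapp] at hk
    rw [LinearMap.mem_ker, hγapp]
    have hπr : r • m₀ = 0 := by
      have hc := congrArg π hk
      rw [map_add, map_smul, hπp₀, LinearMap.mem_ker.mp κ.2, add_zero, map_zero] at hc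
      exact hc
    have hmem : r • p₀ ∈ LinearMap.ker π := by
      rw [LinearMap.mem_ker, map_smul, hπp₀, hπr]
    have hκ : κ = -(⟨r • p₀, hmem⟩ : LinearMap.ker π) := by
      apply Subtype.ext
      show (κ : P0) = -(r • p₀)
      rw [eq_neg_iff_add_eq_zero, add_comm]
      exact hk
    rw [hκ, map_neg, claimA r hπr hmem, neg_zero]
  let Ξ : P0 →ₗ[R] Nn :=
    (Submodule.liftQ (LinearMap.ker β) γ hkerβγ).comp
      (LinearMap.quotKerEquivOfSurjective β hβ).symm.toLinearMap
  have hΞ : ∀ x, Ξ (β x) = γ x := by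
    intro x
    have h1 : (LinearMap.quotKerEquivOfSurjective β hβ).symm (β x)
        = Submodule.Quotient.mk x := by
      rw [LinearEquiv.symm_apply_eq]
      rfl
    show Submodule.liftQ (LinearMap.ker β) γ hkerβγ
        ((LinearMap.quotKerEquivOfSurjective β hβ).symm (β x)) = γ x
    rw [h1, Submodule.liftQ_apply]
  refine ⟨Ξ, ?_⟩
  ext x
  have hmem : d x ∈ LinearMap.ker π := hd ▸ LinearMap.mem_range_self d x
  have hb : β (0, ⟨d x, hmem⟩) = d x := by rw [hβapp, zero_smul, zero_add]
  calc Ξ (d x) = Ξ (β (0, ⟨d x, hmem⟩)) := by rw [hb]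
    _ = γ (0, ⟨d x, hmem⟩) := hΞ _
    _ = ξ ⟨d x, hmem⟩ := rfl
    _ = φ x := hξ x hmem


/-- let `S` be a finite regular monoid, `k` a field, and `M, N` simple right
`kS`-modules with apexes at idempotents `e, f` respectively.  If `SeS ⊄ SfS` and
`SfS ⊄ SeS` (the apexes are incomparable in the `J`-order), then `Ext¹_{kS}(M, N) = 0`. -/
theorem stmt8 (k : Type) [Field k] (S : Type) [Monoid S] [Finite S]
    (hreg : ∀ s : S, ∃ t : S, s * t * s = s)
    (e f : S) (he : e * e = e) (hf : f * f = f)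
    (M N : ModuleCat (MonoidAlgebra k S)ᵐᵒᵖ)
    (hMsimple : IsSimpleModule (MonoidAlgebra k S)ᵐᵒᵖ M)
    (hNsimple : IsSimpleModule (MonoidAlgebra k S)ᵐᵒᵖ N)
    (hMapex : ∀ g : S, g * g = g →
      ((∃ m : M, op (MonoidAlgebra.single g (1 : k)) • m ≠ 0) ↔
        {x : S | ∃ u v : S, x = u * e * v} ⊆ {x : S | ∃ u v : S, x = u * g * v}))
    (hNapex : ∀ g : S, g * g = g →
      ((∃ m : N, op (MonoidAlgebra.single g (1 : k)) • m ≠ 0) ↔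
        {x : S | ∃ u v : S, x = u * f * v} ⊆ {x : S | ∃ u v : S, x = u * g * v}))
    (hincomp :
      ¬ {x : S | ∃ u v : S, x = u * e * v} ⊆ {x : S | ∃ u v : S, x = u * f * v} ∧
      ¬ {x : S | ∃ u v : S, x = u * f * v} ⊆ {x : S | ∃ u v : S, x = u * e * v}) :
    Subsingleton
      (((Ext k (ModuleCat (MonoidAlgebra k S)ᵐᵒᵖ) 1).obj (Opposite.op M)).obj N) := by
  have P : ProjectiveResolution M := (HasProjectiveResolution.out (Z := M)).some
  have hexact : (P.complex.linearYonedaObj k N).ExactAt 1 := by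
    rw [(P.complex.linearYonedaObj k N).exactAt_iff' 0 1 2 (by simp) (by simp),
      ShortComplex.moduleCat_exact_iff]
    intro x₂ hx₂
    have hx₂' : P.complex.d 2 1 ≫ x₂ = 0 := hx₂
    -- data for the core lemma
    let ι : ((ChainComplex.single₀ (ModuleCat (MonoidAlgebra k S)ᵐᵒᵖ)).obj M).X 0 ≅ M :=
      HomologicalComplex.singleObjXSelf (ComplexShape.down ℕ) 0 M
    let π0 : P.complex.X 0 ⟶ M := P.π.f 0 ≫ ι.hom
    have hπ0 : Function.Surjective π0 := by
      have h1 : Epi π0 := epi_comp _ _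
      exact (ModuleCat.epi_iff_surjective π0).1 h1
    have hex0 := P.exact₀
    rw [ShortComplex.moduleCat_exact_iff_range_eq_ker] at hex0
    have hι : Function.Injective ι.hom := by
      have h1 : Mono ι.hom := inferInstance
      exact (ModuleCat.mono_iff_injective ι.hom).1 h1
    have hd : LinearMap.range (P.complex.d 1 0 : P.complex.X 1 ⟶ P.complex.X 0).hom
        = LinearMap.ker (π0 : P.complex.X 0 ⟶ M).hom := by
      rw [hex0]
      ext x
      constructor
      · intro hx
        rw [LinearMap.mem_ker] at hx ⊢
        show ι.hom (P.π.f 0 x) = 0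
        rw [hx, map_zero]
      · intro hx
        rw [LinearMap.mem_ker] at hx ⊢
        apply hι
        rw [map_zero]
        exact hx
    let x₂' : P.complex.X 1 ⟶ N := x₂
    have hx₂'' : P.complex.d 2 1 ≫ x₂' = 0 := hx₂
    have hex1 := P.exact_succ 0
    rw [ShortComplex.moduleCat_exact_iff_range_eq_ker] at hex1
    have hex1' : LinearMap.range (P.complex.d 2 1 : P.complex.X 2 ⟶ P.complex.X 1).hom
        = LinearMap.ker (P.complex.d 1 0 : P.complex.X 1 ⟶ P.complex.X 0).hom := hex1
    have hφ : LinearMap.ker (P.complex.d 1 0 : P.complex.X 1 ⟶ P.complex.X 0).hom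
        ≤ LinearMap.ker x₂'.hom := by
      intro y hy
      rw [← hex1'] at hy
      obtain ⟨z, hz⟩ := hy
      rw [LinearMap.mem_ker]
      have h9 : x₂' (P.complex.d 2 1 z) = 0 := by
        show (P.complex.d 2 1 ≫ x₂') z = 0
        rw [hx₂'']
        rfl
      rw [← hz]
      exact h9
    -- apex facts
    have hMf : ∀ m : M, op (MonoidAlgebra.single f (1:k)) • m = 0 := by
      intro m; by_contra hm; exact hincomp.1 ((hMapex f hf).mp ⟨m, hm⟩)
    have hNe : ∀ n : N, op (MonoidAlgebra.single e (1:k)) • n = 0 := by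
      intro n; by_contra hn; exact hincomp.2 ((hNapex e he).mp ⟨n, hn⟩)
    have hMe : ∃ m : M, op (MonoidAlgebra.single e (1:k)) • m ≠ 0 :=
      (hMapex e he).mpr (subset_refl _)
    have hNf : ∃ n : N, op (MonoidAlgebra.single f (1:k)) • n ≠ 0 :=
      (hNapex f hf).mpr (subset_refl _)
    obtain ⟨ψ, hψ⟩ := stmt8_core (k := k) (S := S) hreg e f he hf hMsimple hNsimple hMe hMf hNf hNe
      (P.complex.d 1 0 : P.complex.X 1 ⟶ P.complex.X 0).hom (π0 : P.complex.X 0 ⟶ M).hom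
      hπ0 hd x₂'.hom hφ
    exact ⟨ModuleCat.ofHom ψ, ModuleCat.hom_ext hψ⟩
  have hzero : Limits.IsZero ((P.complex.linearYonedaObj k N).homology 1) :=
    ((P.complex.linearYonedaObj k N).exactAt_iff_isZero_homology 1).1 hexact
  have hzero2 : Limits.IsZero
      (((Ext k (ModuleCat (MonoidAlgebra k S)ᵐᵒᵖ) 1).obj (Opposite.op M)).obj N) :=
    hzero.of_iso (P.isoExt 1 N)
  have hid : 𝟙 (((Ext k (ModuleCat (MonoidAlgebra k S)ᵐᵒᵖ) 1).obj (Opposite.op M)).obj N)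
      = 0 := hzero2.eq_of_src _ _
  constructor
  intro a b
  have key : ∀ x : (((Ext k (ModuleCat (MonoidAlgebra k S)ᵐᵒᵖ) 1).obj (Opposite.op M)).obj N),
      x = 0 := by
    intro x
    calc x = (𝟙 (((Ext k (ModuleCat (MonoidAlgebra k S)ᵐᵒᵖ) 1).obj (Opposite.op M)).obj N)) x := rfl
    _ = (0 : (((Ext k (ModuleCat (MonoidAlgebra k S)ᵐᵒᵖ) 1).obj (Opposite.op M)).obj N) ⟶ _) x := by rw [hid]
    _ = 0 := rfl
  rw [key a, key b]
end

section
/- Let S be a finite regular monoid and k a field whose characteristic does not divide the order of any maximal subgroup of S. Let M and N be simple right kS-modules having apexes at idempotents e and f of S, respectively. If Ext¹_{kS}(M, N) ≠ 0, then either SeS ⊊ SfS or SfS ⊊ SeS (the apexes are strictly comparable in the J-order). -/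
open CategoryTheory MulOpposite

open CategoryTheory MulOpposite


namespace Stmt10

variable {k : Type} [Field k] {S : Type} [Monoid S]

/-- right action of `s` as an element of the opposite monoid algebra -/
noncomputable def act (k : Type) [Field k] {S : Type} [Monoid S] (s : S) : (MonoidAlgebra k S)ᵐᵒᵖ :=
  op (MonoidAlgebra.single s 1)

lemma act_mul (s t : S) : act k t * act k (S := S) s = act k (s * t) := by
  simp [act, ← op_mul, MonoidAlgebra.single_mul_single]

variable {V : Type u} [AddCommGroup V] [Module (MonoidAlgebra k S)ᵐᵒᵖ V]

lemma act_act (s t : S) (v : V) : act k t • (act k s • v) = act k (s * t) • v := by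
  rw [smul_smul, act_mul]

lemma act_one_smul (v : V) : act k (1 : S) • v = v := by
  have : act k (1 : S) = 1 := by
    simp [act, MonoidAlgebra.one_def]
  rw [this, one_smul]

lemma single_smul (g : S) (b : k) (v : V) :
    (op (MonoidAlgebra.single g b) : (MonoidAlgebra k S)ᵐᵒᵖ) • v
      = (op (MonoidAlgebra.single 1 b) : (MonoidAlgebra k S)ᵐᵒᵖ) • (act k g • v) := by
  rw [smul_smul, act]
  congr 1
  rw [← op_mul, MonoidAlgebra.single_mul_single, one_mul, mul_one]

lemma op_smul_op_smul (x y : MonoidAlgebra k S) (v : V) :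
    (op (x * y) : (MonoidAlgebra k S)ᵐᵒᵖ) • v = op y • (op x • v) := by
  rw [smul_smul, ← op_mul]

lemma algebraMap_op_eq (b : k) :
    (op (MonoidAlgebra.single 1 b) : (MonoidAlgebra k S)ᵐᵒᵖ)
      = algebraMap k (MonoidAlgebra k S)ᵐᵒᵖ b := by
  rw [MulOpposite.algebraMap_apply]
  congr 1

lemma mulsingle_smul_zero (c : MonoidAlgebra k S) (w : S) (v : V)
    (h : ∀ s : S, act k (s * w) • v = 0) :
    (op (c * MonoidAlgebra.single w 1) : (MonoidAlgebra k S)ᵐᵒᵖ) • v = 0 := by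
  induction c using MonoidAlgebra.induction_on with
  | of g =>
      rw [show (MonoidAlgebra.of k S) g = MonoidAlgebra.single g 1 from rfl,
        MonoidAlgebra.single_mul_single, one_mul]
      exact h g
  | add f g hf hg =>
      rw [add_mul, show (op (f * MonoidAlgebra.single w 1 + g * MonoidAlgebra.single w 1) :
        (MonoidAlgebra k S)ᵐᵒᵖ) = op (f * MonoidAlgebra.single w 1)
          + op (g * MonoidAlgebra.single w 1) from rfl, add_smul, hf, hg, add_zero]
  | smul r f hf =>
      rw [smul_mul_assoc, show (op (r • (f * MonoidAlgebra.single w 1)) :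
          (MonoidAlgebra k S)ᵐᵒᵖ) = r • op (f * MonoidAlgebra.single w 1) from rfl,
        Algebra.smul_def, mul_smul, hf, smul_zero]

lemma mulsingle_smul_mem [Module k V]
    (hcomp : ∀ (b : k) (v : V),
      (op (MonoidAlgebra.single 1 b) : (MonoidAlgebra k S)ᵐᵒᵖ) • v = b • v)
    (W : Submodule k V) (c : MonoidAlgebra k S) (w : S) (v : V)
    (h : ∀ s : S, act k (s * w) • v ∈ W) :
    (op (c * MonoidAlgebra.single w 1) : (MonoidAlgebra k S)ᵐᵒᵖ) • v ∈ W := by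
  induction c using MonoidAlgebra.induction_on with
  | of g =>
      rw [show (MonoidAlgebra.of k S) g = MonoidAlgebra.single g 1 from rfl,
        MonoidAlgebra.single_mul_single, one_mul]
      exact h g
  | add f g hf hg =>
      rw [add_mul, show (op (f * MonoidAlgebra.single w 1 + g * MonoidAlgebra.single w 1) :
        (MonoidAlgebra k S)ᵐᵒᵖ) = op (f * MonoidAlgebra.single w 1)
          + op (g * MonoidAlgebra.single w 1) from rfl, add_smul]
      exact W.add_mem hf hg
  | smul r f hf =>
      rw [smul_mul_assoc, show (op (r • (f * MonoidAlgebra.single w 1)) :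
          (MonoidAlgebra k S)ᵐᵒᵖ) = r • op (f * MonoidAlgebra.single w 1) from rfl,
        Algebra.smul_def, mul_smul, ← algebraMap_op_eq, hcomp]
      exact W.smul_mem _ hf

end Stmt10
namespace Stmt10

variable {S : Type} [Monoid S]

/-- the two-sided principal ideal as a set -/
def JJ (w : S) : Set S := {x : S | ∃ u v : S, x = u * w * v}

lemma self_mem_JJ (w : S) : w ∈ JJ w := ⟨1, 1, by simp⟩

lemma JJ_le {w s : S} (h : ∃ u v : S, w = u * s * v) : JJ w ⊆ JJ s := by
  rintro x ⟨a, b, rfl⟩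
  obtain ⟨u, v, rfl⟩ := h
  exact ⟨a * u, v * b, by simp [mul_assoc]⟩

section e

lemma eabs {e x : S} (he : e * e = e) (hx : e * x * e = x) : e * x = x ∧ x * e = x := by
  constructor
  · conv_lhs => rw [← hx]
    rw [show e * (e * x * e) = e * e * x * e by simp [mul_assoc], he, hx]
  · conv_lhs => rw [← hx]
    rw [show e * x * e * e = e * x * (e * e) by simp [mul_assoc], he, hx]

/-- In a finite monoid, if `e ∈ S u S` with `u ∈ eSe`, then `u` is a unit of `eSe`. -/
lemma unit_of_J {e u a b : S} [Finite S] (he : e * e = e) (hu : e * u * e = u)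
    (hab : e = a * u * b) :
    ∃ y : S, e * y * e = y ∧ u * y = e ∧ y * u = e := by
  set a₁ := e * a * e with ha₁
  set b₁ := e * b * e with hb₁
  have ha₁T : e * a₁ * e = a₁ := by
    rw [ha₁, show e * (e * a * e) * e = (e * e) * a * (e * e) by simp [mul_assoc], he]
  have hb₁T : e * b₁ * e = b₁ := by
    rw [hb₁, show e * (e * b * e) * e = (e * e) * b * (e * e) by simp [mul_assoc], he]
  have huT : e * u = u ∧ u * e = u := eabs he hu
  have key : a₁ * u * b₁ = e := by
    rw [ha₁, hb₁,
      show e * a * e * u * (e * b * e) = e * (a * (e * u * e) * b) * e by simp [mul_assoc],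
      hu, show a * u * b = e from hab.symm, he, he]
  -- the submonoid eSe as a subtype
  let T := {x : S // e * x * e = x}
  have hmulT : ∀ x y : T, e * (x.1 * y.1) * e = x.1 * y.1 := by
    rintro ⟨x, hx⟩ ⟨y, hy⟩
    dsimp
    rw [show e * (x * y) * e = (e * x) * (y * e) by simp [mul_assoc],
      (eabs he hx).1, (eabs he hy).2]
  have heT : e * e * e = e := by rw [he, he]
  -- left multiplication by a₁ on T is surjective, hence injective
  have hL : Function.Injective (fun t : T => (⟨a₁ * t.1, hmulT ⟨a₁, ha₁T⟩ t⟩ : T)) := by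
    rw [Finite.injective_iff_surjective]
    rintro ⟨x, hx⟩
    refine ⟨⟨u * b₁ * x, ?_⟩, ?_⟩
    · rw [show e * (u * b₁ * x) * e = (e * u) * b₁ * (x * e) by simp [mul_assoc],
        huT.1, (eabs he hx).2]
    · apply Subtype.ext
      dsimp
      rw [show a₁ * (u * b₁ * x) = (a₁ * u * b₁) * x by simp [mul_assoc], key,
        (eabs he hx).1]
  have hca : u * b₁ * a₁ = e := by
    have hmem : e * (u * b₁ * a₁) * e = u * b₁ * a₁ := by
      rw [show e * (u * b₁ * a₁) * e = (e * u) * b₁ * (a₁ * e) by simp [mul_assoc],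
        huT.1, (eabs he ha₁T).2]
    have h1 : (fun t : T => (⟨a₁ * t.1, hmulT ⟨a₁, ha₁T⟩ t⟩ : T)) ⟨u * b₁ * a₁, hmem⟩
        = (fun t : T => (⟨a₁ * t.1, hmulT ⟨a₁, ha₁T⟩ t⟩ : T)) ⟨e, heT⟩ := by
      apply Subtype.ext
      dsimp
      rw [show a₁ * (u * b₁ * a₁) = (a₁ * u * b₁) * a₁ by simp [mul_assoc], key,
        (eabs he ha₁T).1, (eabs he ha₁T).2]
    exact congrArg Subtype.val (hL h1)
  -- right multiplication by b₁ on T is surjective, hence injective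
  have hR : Function.Injective (fun t : T => (⟨t.1 * b₁, hmulT t ⟨b₁, hb₁T⟩⟩ : T)) := by
    rw [Finite.injective_iff_surjective]
    rintro ⟨x, hx⟩
    refine ⟨⟨x * a₁ * u, ?_⟩, ?_⟩
    · rw [show e * (x * a₁ * u) * e = (e * x) * a₁ * (u * e) by simp [mul_assoc],
        huT.2, (eabs he hx).1]
    · apply Subtype.ext
      dsimp
      rw [show x * a₁ * u * b₁ = x * (a₁ * u * b₁) by simp [mul_assoc], key,
        (eabs he hx).2]
  have hbd : b₁ * (a₁ * u) = e := by
    have hmem : e * (b₁ * (a₁ * u)) * e = b₁ * (a₁ * u) := by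
      rw [show e * (b₁ * (a₁ * u)) * e = (e * b₁) * (a₁ * (u * e)) by simp [mul_assoc],
        huT.2, (eabs he hb₁T).1]
    have h1 : (fun t : T => (⟨t.1 * b₁, hmulT t ⟨b₁, hb₁T⟩⟩ : T)) ⟨b₁ * (a₁ * u), hmem⟩
        = (fun t : T => (⟨t.1 * b₁, hmulT t ⟨b₁, hb₁T⟩⟩ : T)) ⟨e, heT⟩ := by
      apply Subtype.ext
      dsimp
      rw [show b₁ * (a₁ * u) * b₁ = b₁ * (a₁ * u * b₁) by simp [mul_assoc], key,
        (eabs he hb₁T).2, (eabs he hb₁T).1]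
    exact congrArg Subtype.val (hR h1)
  refine ⟨b₁ * a₁, ?_, ?_, ?_⟩
  · rw [show e * (b₁ * a₁) * e = (e * b₁) * (a₁ * e) by simp [mul_assoc],
      (eabs he hb₁T).1, (eabs he ha₁T).2]
  · rw [show u * (b₁ * a₁) = u * b₁ * a₁ by simp [mul_assoc], hca]
  · rw [show b₁ * a₁ * u = b₁ * (a₁ * u) by simp [mul_assoc], hbd]

end e
end Stmt10
namespace Stmt10

lemma mkRetraction {R : Type} [Ring R] {M N E : Type u}
    [AddCommGroup M] [Module R M] [AddCommGroup N] [Module R N]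
    [AddCommGroup E] [Module R E]
    (ι : N →ₗ[R] E) (p : E →ₗ[R] M) (hι : Function.Injective ι)
    (hker : LinearMap.range ι = LinearMap.ker p)
    (M' : Submodule R E) (hsup : ∀ y : E, ∃ z ∈ M', p z = p y)
    (hinf : ∀ z ∈ M', p z = 0 → z = 0) :
    ∃ r : E →ₗ[R] N, r.comp ι = LinearMap.id := by
  have hcompl : IsCompl (LinearMap.ker p) M' := by
    constructor
    · rw [disjoint_iff_inf_le]
      intro z hz
      rw [Submodule.mem_inf] at hz
      rw [Submodule.mem_bot]
      exact hinf z hz.2 (LinearMap.mem_ker.mp hz.1)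
    · rw [codisjoint_iff_le_sup]
      intro y _
      obtain ⟨z, hz, hpz⟩ := hsup y
      have h1 : y - z ∈ LinearMap.ker p := by
        rw [LinearMap.mem_ker, map_sub, hpz, sub_self]
      have h2 : y = (y - z) + z := by abel
      exact h2 ▸ Submodule.add_mem_sup h1 hz
  let proj := (LinearMap.ker p).linearProjOfIsCompl M' hcompl
  let eN : N ≃ₗ[R] LinearMap.range ι := LinearEquiv.ofInjective ι hι
  let eq2 : (LinearMap.range ι : Submodule R E) ≃ₗ[R] LinearMap.ker p :=
    LinearEquiv.ofEq _ _ hker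
  refine ⟨(eN.symm.toLinearMap.comp eq2.symm.toLinearMap).comp proj, ?_⟩
  ext n
  have hmem : ι n ∈ LinearMap.ker p := hker ▸ LinearMap.mem_range_self ι n
  have h1 : proj (ι n) = ⟨ι n, hmem⟩ :=
    Submodule.linearProjOfIsCompl_apply_left hcompl ⟨ι n, hmem⟩
  apply hι
  have hcoe : ∀ z : N, ((eN z : LinearMap.range ι) : E) = ι z := fun z => rfl
  have h2 : ∀ y : LinearMap.range ι, ι (eN.symm y) = y.1 := fun y => by
    rw [← hcoe, eN.apply_symm_apply]
  simp only [LinearMap.coe_comp, Function.comp_apply, LinearMap.id_coe, id_eq,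
    LinearEquiv.coe_coe]
  rw [h1, h2]
  rw [show eq2.symm = LinearEquiv.ofEq _ _ hker.symm from rfl, LinearEquiv.coe_ofEq_apply]

end Stmt10
namespace Stmt10

variable {k : Type} [Field k] {S : Type} [Monoid S]

lemma ann {V : Type u} [AddCommGroup V] [Module (MonoidAlgebra k S)ᵐᵒᵖ V] {w : S}
    (hreg : ∀ s : S, ∃ t : S, s * t * s = s)
    (hapex : ∀ g : S, g * g = g → ((∃ v : V, act k g • v ≠ 0) ↔ JJ w ⊆ JJ g))
    {s : S} (hns : ¬ JJ w ⊆ JJ s) (v : V) : act k s • v = 0 := by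
  by_contra hv
  obtain ⟨t, ht⟩ := hreg s
  have hidem : (t * s) * (t * s) = t * s := by
    rw [show t * s * (t * s) = t * (s * t * s) by simp [mul_assoc], ht]
  have h2 : act k (t * s) • (act k s • v) ≠ 0 := by
    rw [act_act, show s * (t * s) = s * t * s by simp [mul_assoc], ht]
    exact hv
  have hJ := (hapex (t * s) hidem).mp ⟨_, h2⟩
  exact hns (hJ.trans (JJ_le ⟨t, 1, by simp⟩))

/-- the maximal subgroup at an idempotent, as a subtype -/
abbrev GG (e : S) : Type :=
  {x : S // e * x * e = x ∧ ∃ y : S, (e * y * e = y) ∧ x * y = e ∧ y * x = e}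

lemma GG_mul_mem {e : S} (he : e * e = e) (a b : GG e) :
    (e * (a.1 * b.1) * e = a.1 * b.1) ∧
      ∃ y : S, (e * y * e = y) ∧ (a.1 * b.1) * y = e ∧ y * (a.1 * b.1) = e := by
  obtain ⟨haT, ya, hyaT, hay, hya⟩ := a.2
  obtain ⟨hbT, yb, hybT, hby, hyb⟩ := b.2
  constructor
  · rw [show e * (a.1 * b.1) * e = (e * a.1) * (b.1 * e) by simp [mul_assoc],
      (eabs he haT).1, (eabs he hbT).2]
  · refine ⟨yb * ya, ?_, ?_, ?_⟩
    · rw [show e * (yb * ya) * e = (e * yb) * (ya * e) by simp [mul_assoc],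
        (eabs he hybT).1, (eabs he hyaT).2]
    · rw [show a.1 * b.1 * (yb * ya) = a.1 * (b.1 * yb) * ya by simp [mul_assoc], hby,
        mul_assoc, (eabs he hyaT).1, hay]
    · rw [show yb * ya * (a.1 * b.1) = yb * (ya * a.1) * b.1 by simp [mul_assoc], hya,
        mul_assoc, (eabs he hbT).1, hyb]

noncomputable def GGgroup {e : S} (he : e * e = e) : Group (GG e) where
  mul a b := ⟨a.1 * b.1, GG_mul_mem he a b⟩
  one := ⟨e, by rw [he, he], ⟨e, by rw [he, he], he, he⟩⟩
  inv a := ⟨Classical.choose a.2.2, (Classical.choose_spec a.2.2).1,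
    ⟨a.1, a.2.1, (Classical.choose_spec a.2.2).2.2, (Classical.choose_spec a.2.2).2.1⟩⟩
  mul_assoc a b c := Subtype.ext (mul_assoc a.1 b.1 c.1)
  one_mul a := Subtype.ext ((eabs he a.2.1).1)
  mul_one a := Subtype.ext ((eabs he a.2.1).2)
  inv_mul_cancel a := Subtype.ext (Classical.choose_spec a.2.2).2.2

end Stmt10
namespace Stmt10

variable {k : Type} [Field k] {S : Type} [Monoid S]

lemma split [Finite S]
    (hreg : ∀ s : S, ∃ t : S, s * t * s = s)
    (hchar : ∀ g : S, g * g = g →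
      ¬ (ringChar k ∣ Nat.card {x : S // (g * x * g = x) ∧
          ∃ y : S, (g * y * g = y) ∧ x * y = g ∧ y * x = g}))
    {e f : S} (he : e * e = e) (hf : f * f = f)
    {M N E : Type u} [AddCommGroup M] [Module (MonoidAlgebra k S)ᵐᵒᵖ M]
    [AddCommGroup N] [Module (MonoidAlgebra k S)ᵐᵒᵖ N]
    [AddCommGroup E] [Module (MonoidAlgebra k S)ᵐᵒᵖ E]
    (hMsimple : IsSimpleModule (MonoidAlgebra k S)ᵐᵒᵖ M)
    (hNsimple : IsSimpleModule (MonoidAlgebra k S)ᵐᵒᵖ N)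
    (hMapex : ∀ g : S, g * g = g → ((∃ m : M, act k g • m ≠ 0) ↔ JJ e ⊆ JJ g))
    (hNapex : ∀ g : S, g * g = g → ((∃ n : N, act k g • n ≠ 0) ↔ JJ f ⊆ JJ g))
    (hcase : JJ e = JJ f ∨ (¬ JJ e ⊆ JJ f ∧ ¬ JJ f ⊆ JJ e))
    (ι : N →ₗ[(MonoidAlgebra k S)ᵐᵒᵖ] E) (p : E →ₗ[(MonoidAlgebra k S)ᵐᵒᵖ] M)
    (hι : Function.Injective ι) (hp : Function.Surjective p)
    (hker : LinearMap.range ι = LinearMap.ker p) :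
    ∃ r : E →ₗ[(MonoidAlgebra k S)ᵐᵒᵖ] N, r.comp ι = LinearMap.id := by
  classical
  set R := (MonoidAlgebra k S)ᵐᵒᵖ
  have annM : ∀ s : S, ¬ JJ e ⊆ JJ s → ∀ m : M, act k s • m = 0 :=
    fun s hs => ann hreg hMapex hs
  have annN : ∀ s : S, ¬ JJ f ⊆ JJ s → ∀ n : N, act k s • n = 0 :=
    fun s hs => ann hreg hNapex hs
  obtain ⟨m₀, hm₀⟩ : ∃ m : M, act k e • m ≠ 0 := (hMapex e he).mpr subset_rfl
  haveI := hMsimple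
  haveI := hNsimple
  rcases hcase with heq | ⟨hef, hfe⟩
  · -- CASE A : equal apexes
    obtain ⟨n₀, hn₀⟩ : ∃ n : N, act k e • n ≠ 0 := by
      refine (hNapex e he).mpr ?_
      rw [← heq]
    have annN' : ∀ s : S, ¬ JJ e ⊆ JJ s → ∀ n : N, act k s • n = 0 :=
      fun s hs => annN s (by rw [← heq]; exact hs)
    have keyU : ∀ u : S, e * u * e = u →
        (¬ ∃ y : S, (e * y * e = y) ∧ u * y = e ∧ y * u = e) →
        ¬ JJ e ⊆ JJ u := by
      intro u huT hnu hsub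
      obtain ⟨a, b, hab⟩ := hsub (self_mem_JJ e)
      exact hnu (unit_of_J he huT hab)
    letI : Group (GG e) := GGgroup he
    letI : Fintype (GG e) := Fintype.ofFinite _
    have hn : ((Nat.card (GG e) : k)) ≠ 0 :=
      fun h0 => hchar e he ((ringChar.spec k _).mp h0)
    letI : Module k M := Module.compHom M (algebraMap k R)
    letI : Module k E := Module.compHom E (algebraMap k R)
    have hsmulM : ∀ (c : k) (m : M), c • m = (algebraMap k R c) • m := fun _ _ => rfl
    have hsmulE : ∀ (c : k) (v : E), c • v = (algebraMap k R c) • v := fun _ _ => rfl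
    have hcompE : ∀ (b : k) (v : E), (op (MonoidAlgebra.single 1 b) : R) • v = b • v :=
      fun b v => by rw [hsmulE, ← algebraMap_op_eq]
    have hcommM : ∀ (a : R) (c : k) (m : M), a • (c • m) = c • (a • m) := fun a c m => by
      rw [hsmulM, smul_smul, hsmulM, smul_smul, Algebra.commutes]
    have hcommE : ∀ (a : R) (c : k) (v : E), a • (c • v) = c • (a • v) := fun a c v => by
      rw [hsmulE, smul_smul, hsmulE, smul_smul, Algebra.commutes]
    let rmulM : S → M →ₗ[k] M := fun s =>
      { toFun := fun m => act k s • m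
        map_add' := fun a b => smul_add _ a b
        map_smul' := fun c m => by simp only [RingHom.id_apply]; exact hcommM _ c m }
    let rmulE : S → E →ₗ[k] E := fun s =>
      { toFun := fun v => act k s • v
        map_add' := fun a b => smul_add _ a b
        map_smul' := fun c v => by simp only [RingHom.id_apply]; exact hcommE _ c v }
    let pk : E →ₗ[k] M :=
      { toFun := fun v => p v
        map_add' := fun a b => map_add p a b
        map_smul' := fun c v => by
          simp only [RingHom.id_apply]
          rw [hsmulE, map_smul, hsmulM] }
    have hpk : LinearMap.range pk = ⊤ := LinearMap.range_eq_top.mpr (fun m => by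
      obtain ⟨v, hv⟩ := hp m; exact ⟨v, hv⟩)
    obtain ⟨σ₀, hσ₀⟩ := LinearMap.exists_rightInverse_of_surjective pk hpk
    have hσ₀' : ∀ m : M, p (σ₀ m) = m := fun m => LinearMap.congr_fun hσ₀ m
    set σfun : M →ₗ[k] E := ((Nat.card (GG e) : k))⁻¹ •
      (∑ g : GG e, (rmulE g.1).comp (σ₀.comp (rmulM ((g⁻¹ : GG e).1)))) with hσdef
    have σapp : ∀ m : M, σfun m
        = (Nat.card (GG e) : k)⁻¹ •
          ∑ g : GG e, act k g.1 • σ₀ (act k ((g⁻¹ : GG e).1) • m) := by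
      intro m
      rw [hσdef]
      simp only [LinearMap.smul_apply, LinearMap.coe_sum, Finset.sum_apply,
        LinearMap.comp_apply]
      rfl
    have hpsm : ∀ (c : k) (v : E), p (c • v) = c • p v := fun c v => by
      rw [hsmulE, map_smul, hsmulM]
    have σ1 : ∀ m : M, p (σfun m) = act k e • m := by
      intro m
      rw [σapp, hpsm, map_sum]
      have hterm : ∀ g : GG e, g ∈ (Finset.univ : Finset (GG e)) →
          p (act k g.1 • σ₀ (act k ((g⁻¹ : GG e).1) • m)) = act k e • m := by
        intro g _
        rw [map_smul, hσ₀', act_act,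
          show ((g⁻¹ : GG e)).1 * g.1 = e from congrArg Subtype.val (inv_mul_cancel g)]
      rw [Finset.sum_congr rfl hterm, Finset.sum_const, Finset.card_univ,
        ← Nat.card_eq_fintype_card, ← Nat.cast_smul_eq_nsmul k, smul_smul,
        inv_mul_cancel₀ hn, one_smul]
    have σ2 : ∀ m : M, act k e • σfun m = σfun m := by
      intro m
      rw [σapp, hcommE]
      congr 1
      rw [Finset.smul_sum]
      refine Finset.sum_congr rfl (fun g _ => ?_)
      rw [act_act, show g.1 * e = g.1 from (eabs he g.2.1).2]
    have σ3 : ∀ m : M, σfun (act k e • m) = σfun m := by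
      intro m
      rw [σapp, σapp]
      congr 1
      refine Finset.sum_congr rfl (fun g _ => ?_)
      rw [act_act, show e * ((g⁻¹ : GG e)).1 = ((g⁻¹ : GG e)).1 from
        (eabs he (g⁻¹ : GG e).2.1).1]
    have σ4 : ∀ (h : GG e) (m : M), σfun (act k h.1 • m) = act k h.1 • σfun m := by
      intro h m
      rw [σapp, σapp, hcommE]
      congr 1
      rw [Finset.smul_sum]
      refine Fintype.sum_equiv (Equiv.mulRight h⁻¹) _ _ (fun x => ?_)
      simp only [Equiv.coe_mulRight]
      rw [act_act, act_act,
        show ((x * h⁻¹ : GG e)).1 * h.1 = x.1 from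
          congrArg Subtype.val (inv_mul_cancel_right x h),
        show (((x * h⁻¹)⁻¹ : GG e)).1 = h.1 * ((x⁻¹ : GG e)).1 from
          (congrArg Subtype.val (show (x * h⁻¹)⁻¹ = h * x⁻¹ by
            rw [mul_inv_rev, inv_inv])).trans rfl]
    have σ5 : ∀ u : S, e * u * e = u →
        (¬ ∃ y : S, (e * y * e = y) ∧ u * y = e ∧ y * u = e) →
        ∀ m : M, act k u • σfun m = 0 := by
      intro u huT hnu m
      have h1 : act k u • σfun m ∈ LinearMap.range ι := by
        rw [hker, LinearMap.mem_ker, map_smul, annM u (keyU u huT hnu)]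
      obtain ⟨n1, hn1⟩ := h1
      obtain ⟨t, ht⟩ := hreg u
      have h2 : act k (t * u) • (act k u • σfun m) = act k u • σfun m := by
        rw [act_act, show u * (t * u) = u * t * u by simp [mul_assoc], ht]
      have h3 : act k (t * u) • n1 = 0 :=
        annN' (t * u)
          (fun hsub => keyU u huT hnu (hsub.trans (JJ_le ⟨t, 1, by simp⟩))) n1
      rw [← h2, ← hn1, ← map_smul, h3, map_zero]
    set M' : Submodule R E := Submodule.span R (Set.range fun m : M => σfun m) with hM'def
    have hσmem : ∀ m : M, σfun m ∈ M' := fun m => Submodule.subset_span ⟨m, rfl⟩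
    have star : ∀ z, z ∈ M' → ∀ t : S, act k (t * e) • z ∈ LinearMap.range σfun := by
      intro z hz
      refine Submodule.span_induction
        (p := fun z _ => ∀ t : S, act k (t * e) • z ∈ LinearMap.range σfun)
        ?_ ?_ ?_ ?_ hz
      · rintro _ ⟨m, rfl⟩ t
        show act k (t * e) • σfun m ∈ LinearMap.range σfun
        rw [← σ2 m, act_act]
        have huT : e * (e * (t * e)) * e = e * (t * e) := by
          rw [show e * (e * (t * e)) * e = (e * e) * (t * (e * e)) by simp [mul_assoc], he]
        by_cases hu : ∃ y : S, (e * y * e = y) ∧ (e * (t * e)) * y = e ∧ y * (e * (t * e)) = e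
        · exact ⟨act k ((⟨e * (t * e), huT, hu⟩ : GG e)).1 • m, σ4 _ m⟩
        · rw [σ5 _ huT hu m]
          exact Submodule.zero_mem _
      · intro t
        rw [smul_zero]
        exact Submodule.zero_mem _
      · intro z w _ _ ihz ihw t
        rw [smul_add]
        exact Submodule.add_mem _ (ihz t) (ihw t)
      · intro a z _ ih t
        obtain ⟨c, rfl⟩ : ∃ c : MonoidAlgebra k S, a = op c :=
          ⟨a.unop, (MulOpposite.op_unop a).symm⟩
        have hrw : act k (t * e) • ((op c : R) • z)
            = (op (c * MonoidAlgebra.single (t * e) 1) : R) • z := by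
          rw [smul_smul, act, ← op_mul]
        rw [hrw]
        refine mulsingle_smul_mem hcompE _ c (t * e) z (fun s => ?_)
        rw [show s * (t * e) = (s * t) * e by simp [mul_assoc]]
        exact ih (s * t)
    have hsup : ∀ y : E, ∃ z ∈ M', p z = p y := by
      intro y
      have hpσ : p (σfun m₀) ≠ 0 := by
        rw [σ1]
        exact hm₀
      have hspan : Submodule.span R {p (σfun m₀)} = ⊤ := by
        rcases eq_bot_or_eq_top (Submodule.span R {p (σfun m₀)}) with h | h
        · exact absurd (Submodule.span_singleton_eq_bot.mp h) hpσ
        · exact h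
      have hmem : p y ∈ Submodule.span R {p (σfun m₀)} := hspan ▸ Submodule.mem_top
      obtain ⟨a, ha⟩ := Submodule.mem_span_singleton.mp hmem
      exact ⟨a • σfun m₀, Submodule.smul_mem _ a (hσmem m₀), by rw [map_smul, ha]⟩
    have hinf : ∀ z ∈ M', p z = 0 → z = 0 := by
      intro z hz hpz
      by_contra hz0
      have hzker : z ∈ LinearMap.range ι := by
        rw [hker]
        exact LinearMap.mem_ker.mpr hpz
      obtain ⟨nz, hnz⟩ := hzker
      have hQ : Submodule.comap ι ((LinearMap.ker p) ⊓ M') = ⊤ := by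
        rcases eq_bot_or_eq_top (Submodule.comap ι ((LinearMap.ker p) ⊓ M')) with h | h
        · exfalso
          have hnz' : nz ∈ Submodule.comap ι ((LinearMap.ker p) ⊓ M') := by
            rw [Submodule.mem_comap, hnz]
            exact Submodule.mem_inf.mpr ⟨LinearMap.mem_ker.mpr hpz, hz⟩
          rw [h, Submodule.mem_bot] at hnz'
          exact hz0 (by rw [← hnz, hnz', map_zero])
        · exact h
      have hιn₀ : ι n₀ ∈ M' := by
        have h4 : n₀ ∈ Submodule.comap ι ((LinearMap.ker p) ⊓ M') := hQ ▸ Submodule.mem_top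
        exact (Submodule.mem_inf.mp (Submodule.mem_comap.mp h4)).2
      obtain ⟨m, hm⟩ := star (ι n₀) hιn₀ 1
      rw [one_mul] at hm
      have hp0 : p (σfun m) = 0 := by
        rw [hm, map_smul]
        have hpι : p (ι n₀) = 0 := by
          have h5 : ι n₀ ∈ LinearMap.ker p := by
            rw [← hker]
            exact LinearMap.mem_range_self ι n₀
          exact LinearMap.mem_ker.mp h5
        rw [hpι, smul_zero]
      rw [σ1] at hp0
      have hσ0 : σfun m = 0 := by
        rw [← σ3 m, hp0, map_zero]
      have hfin : ι (act k e • n₀) = ι 0 := by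
        rw [map_smul, ← hm, hσ0, map_zero]
      exact hn₀ (hι hfin)
    exact mkRetraction ι p hι hker M' hsup hinf
  · -- CASE B : incomparable apexes
    obtain ⟨x₀, hx₀⟩ := hp m₀
    have hpx : p (act k e • x₀) = act k e • m₀ := by rw [map_smul, hx₀]
    have key0 : ∀ s : S, ∀ y : E, act k (e * (s * f)) • y = 0 := by
      intro s y
      have hJuf : JJ (e * (s * f)) ⊆ JJ f := JJ_le ⟨e * s, 1, by simp [mul_assoc]⟩
      have hJue : JJ (e * (s * f)) ⊆ JJ e := JJ_le ⟨1, s * f, by simp [mul_assoc]⟩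
      have hMu : ∀ m : M, act k (e * (s * f)) • m = 0 :=
        annM _ (fun hsub => hef (hsub.trans hJuf))
      have hmemker : act k (e * (s * f)) • y ∈ LinearMap.ker p := by
        rw [LinearMap.mem_ker, map_smul, hMu]
      rw [← hker] at hmemker
      obtain ⟨n, hn⟩ := hmemker
      obtain ⟨t, ht⟩ := hreg (e * (s * f))
      have h1 : act k (t * (e * (s * f))) • (act k (e * (s * f)) • y)
          = act k (e * (s * f)) • y := by
        rw [act_act, show (e * (s * f)) * (t * (e * (s * f)))
            = (e * (s * f)) * t * (e * (s * f)) by simp [mul_assoc], ht]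
      have hNn : act k (t * (e * (s * f))) • n = 0 :=
        annN _ (fun hsub => hfe ((hsub.trans (JJ_le ⟨t, 1, by simp⟩)).trans hJue)) n
      rw [← h1, ← hn, ← map_smul, hNn, map_zero]
    set x : E := act k e • x₀ with hxdef
    set M' : Submodule R E := Submodule.span R {x} with hM'def
    have hxmem : x ∈ M' := Submodule.mem_span_singleton_self x
    have hsup : ∀ y : E, ∃ z ∈ M', p z = p y := by
      intro y
      have hspan : Submodule.span R {p x} = ⊤ := by
        rcases eq_bot_or_eq_top (Submodule.span R {p x}) with h | h
        · exact absurd (Submodule.span_singleton_eq_bot.mp h) (hpx ▸ hm₀)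
        · exact h
      have hmem : p y ∈ Submodule.span R {p x} := hspan ▸ Submodule.mem_top
      obtain ⟨a, ha⟩ := Submodule.mem_span_singleton.mp hmem
      exact ⟨a • x, Submodule.smul_mem _ a hxmem, by rw [map_smul, ha]⟩
    have hinf : ∀ z ∈ M', p z = 0 → z = 0 := by
      intro z hz hpz
      by_contra hz0
      have hzker : z ∈ LinearMap.range ι := by rw [hker]; exact LinearMap.mem_ker.mpr hpz
      obtain ⟨nz, hnz⟩ := hzker
      have hQ : Submodule.comap ι ((LinearMap.ker p) ⊓ M') = ⊤ := by
        rcases eq_bot_or_eq_top (Submodule.comap ι ((LinearMap.ker p) ⊓ M')) with h | h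
        · exfalso
          have hnz' : nz ∈ Submodule.comap ι ((LinearMap.ker p) ⊓ M') := by
            rw [Submodule.mem_comap, hnz]
            exact Submodule.mem_inf.mpr ⟨LinearMap.mem_ker.mpr hpz, hz⟩
          rw [h, Submodule.mem_bot] at hnz'
          exact hz0 (by rw [← hnz, hnz', map_zero])
        · exact h
      obtain ⟨n₀, hn₀⟩ : ∃ n : N, act k f • n ≠ 0 := (hNapex f hf).mpr subset_rfl
      have hιn₀ : ι n₀ ∈ M' := by
        have : n₀ ∈ Submodule.comap ι ((LinearMap.ker p) ⊓ M') := hQ ▸ Submodule.mem_top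
        exact (Submodule.mem_inf.mp (Submodule.mem_comap.mp this)).2
      obtain ⟨a, ha⟩ := Submodule.mem_span_singleton.mp hιn₀
      obtain ⟨c, rfl⟩ : ∃ c : MonoidAlgebra k S, a = op c := ⟨a.unop, (MulOpposite.op_unop a).symm⟩
      have hzero : act k f • ι n₀ = 0 := by
        rw [← ha]
        have hrw : act k f • ((op c : R) • x)
            = (op (c * MonoidAlgebra.single f 1) : R) • x := by
          rw [smul_smul, act, ← op_mul]
        rw [hrw]
        apply mulsingle_smul_zero
        intro s
        rw [hxdef, act_act]
        exact key0 s x₀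
      rw [← map_smul] at hzero
      have h0 : ι (act k f • n₀) = ι 0 := by simp only [hzero, map_zero]
      exact hn₀ (hι h0)
    exact mkRetraction ι p hι hker M' hsup hinf

end Stmt10
open CategoryTheory MulOpposite


/-- let `S` be a finite regular monoid and `k` a field whose characteristic
divides the order of no maximal subgroup of `S` (the maximal subgroup at an idempotent `g`
being the group of units of `gSg`).  If `M, N` are simple right `kS`-modules with apexes
at idempotents `e, f` and `Ext¹_{kS}(M, N) ≠ 0`, then `SeS ⊊ SfS` or `SfS ⊊ SeS`. -/
theorem stmt10 (k : Type) [Field k] (S : Type) [Monoid S] [Finite S]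
    (hreg : ∀ s : S, ∃ t : S, s * t * s = s)
    (hchar : ∀ g : S, g * g = g →
      ¬ (ringChar k ∣ Nat.card {x : S // (g * x * g = x) ∧
          ∃ y : S, (g * y * g = y) ∧ x * y = g ∧ y * x = g}))
    (e f : S) (he : e * e = e) (hf : f * f = f)
    (M N : ModuleCat (MonoidAlgebra k S)ᵐᵒᵖ)
    (hMsimple : IsSimpleModule (MonoidAlgebra k S)ᵐᵒᵖ M)
    (hNsimple : IsSimpleModule (MonoidAlgebra k S)ᵐᵒᵖ N)
    (hMapex : ∀ g : S, g * g = g →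
      ((∃ m : M, op (MonoidAlgebra.single g (1 : k)) • m ≠ 0) ↔
        {x : S | ∃ u v : S, x = u * e * v} ⊆ {x : S | ∃ u v : S, x = u * g * v}))
    (hNapex : ∀ g : S, g * g = g →
      ((∃ m : N, op (MonoidAlgebra.single g (1 : k)) • m ≠ 0) ↔
        {x : S | ∃ u v : S, x = u * f * v} ⊆ {x : S | ∃ u v : S, x = u * g * v}))
    (hext : ¬ Subsingleton
      (((Ext k (ModuleCat (MonoidAlgebra k S)ᵐᵒᵖ) 1).obj (Opposite.op M)).obj N)) :
    {x : S | ∃ u v : S, x = u * e * v} ⊂ {x : S | ∃ u v : S, x = u * f * v} ∨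
    {x : S | ∃ u v : S, x = u * f * v} ⊂ {x : S | ∃ u v : S, x = u * e * v} := by
  classical
  by_contra hcon
  rw [not_or] at hcon
  obtain ⟨hc1, hc2⟩ := hcon
  have hcase : Stmt10.JJ e = Stmt10.JJ f ∨
      (¬ Stmt10.JJ e ⊆ Stmt10.JJ f ∧ ¬ Stmt10.JJ f ⊆ Stmt10.JJ e) := by
    by_cases h1 : Stmt10.JJ e ⊆ Stmt10.JJ f
    · left
      by_cases h2 : Stmt10.JJ f ⊆ Stmt10.JJ e
      · exact Set.Subset.antisymm h1 h2
      · exact absurd (ssubset_iff_subset_not_subset.mpr ⟨h1, h2⟩) hc1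
    · right
      refine ⟨h1, fun h2 => hc2 (ssubset_iff_subset_not_subset.mpr ⟨h2, h1⟩)⟩
  apply hext
  letI P : ProjectiveResolution M := ProjectiveResolution.of M
  have hiso : (((Ext k (ModuleCat (MonoidAlgebra k S)ᵐᵒᵖ) 1).obj (Opposite.op M)).obj N)
      ≅ (P.complex.linearYonedaObj k N).homology 1 := P.isoExt 1 N
  have hzero : Limits.IsZero ((P.complex.linearYonedaObj k N).homology 1) := by
    rw [← HomologicalComplex.exactAt_iff_isZero_homology]
    rw [HomologicalComplex.exactAt_iff' _ 0 1 2
      (CochainComplex.prev_nat_succ 0) (by simp)]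
    rw [ShortComplex.moduleCat_exact_iff]
    intro g hg
    set d10 := P.complex.d 1 0 with hd10
    set π₀ := P.π.f 0 with hπ₀
    -- the element g is a morphism `P.complex.X 1 ⟶ N`
    let gl : P.complex.X 1 ⟶ N := g
    have hg0 : P.complex.d 2 1 ≫ gl = 0 := by
      have h1 : (P.complex.linearYonedaObj k N).d 1 2 g = 0 := hg
      rw [ChainComplex.linearYonedaObj_d] at h1
      exact h1
    have hepi : Function.Surjective π₀ := by
      rw [← ModuleCat.epi_iff_surjective]
      rw [hπ₀]
      infer_instance
    have hex0 : LinearMap.range (ModuleCat.Hom.hom d10) = LinearMap.ker (ModuleCat.Hom.hom π₀) :=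
      by have h := (ShortComplex.moduleCat_exact_iff_range_eq_ker _).mp P.exact₀; exact h
    have hex1 : ∀ x : ↥(P.complex.X 1), d10 x = 0 → ∃ y, P.complex.d 2 1 y = x :=
      (ShortComplex.moduleCat_exact_iff _).mp (P.exact_succ 0)
    have hkerg : ∀ x : ↥(P.complex.X 1), d10 x = 0 → gl x = 0 := by
      intro x hx
      obtain ⟨y, hy⟩ := hex1 x hx
      calc gl x = gl (P.complex.d 2 1 y) := by rw [hy]
        _ = (P.complex.d 2 1 ≫ gl) y := rfl
        _ = 0 := by rw [hg0]; rfl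
    -- build the extension module
    set W : Submodule (MonoidAlgebra k S)ᵐᵒᵖ (↥(P.complex.X 0) × ↥N) :=
      LinearMap.range (LinearMap.prod (ModuleCat.Hom.hom d10 : ↥(P.complex.X 1) →ₗ[(MonoidAlgebra k S)ᵐᵒᵖ] ↥(P.complex.X 0)) (-(ModuleCat.Hom.hom gl : ↥(P.complex.X 1) →ₗ[(MonoidAlgebra k S)ᵐᵒᵖ] ↥N))) with hW
    have hWmem : ∀ y : ↥(P.complex.X 1), (d10 y, -(gl y)) ∈ W :=
      fun y => ⟨y, rfl⟩
    let ιE : ↥N →ₗ[(MonoidAlgebra k S)ᵐᵒᵖ] ((↥(P.complex.X 0) × ↥N) ⧸ W) :=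
      W.mkQ.comp (LinearMap.inr _ _ _)
    have hWker : W ≤ LinearMap.ker
        ((ModuleCat.Hom.hom π₀ : ↥(P.complex.X 0) →ₗ[(MonoidAlgebra k S)ᵐᵒᵖ] ↥M).comp
          (LinearMap.fst _ _ _)) := by
      rintro _ ⟨y, rfl⟩
      have h2 : π₀ (d10 y) = 0 := by
        calc π₀ (d10 y) = (d10 ≫ π₀) y := rfl
          _ = 0 := by rw [hd10, hπ₀, P.complex_d_comp_π_f_zero]; rfl
      exact LinearMap.mem_ker.mpr h2
    let pE : ((↥(P.complex.X 0) × ↥N) ⧸ W) →ₗ[(MonoidAlgebra k S)ᵐᵒᵖ] ↥M :=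
      W.liftQ _ hWker
    have hιinj : Function.Injective ιE := by
      rw [injective_iff_map_eq_zero]
      intro n hn
      have hmem : ((0 : ↥(P.complex.X 0)), n) ∈ W := by
        rwa [← Submodule.Quotient.mk_eq_zero W]
      obtain ⟨y, hy⟩ := hmem
      have h1 : d10 y = 0 := congrArg Prod.fst hy
      have h2 : -(gl y) = n := congrArg Prod.snd hy
      rw [← h2, hkerg y h1, neg_zero]
    have hpsurj : Function.Surjective pE := by
      intro m
      obtain ⟨x, hx⟩ := hepi m
      exact ⟨W.mkQ (x, 0), hx⟩
    have hkerE : LinearMap.range ιE = LinearMap.ker pE := by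
      apply le_antisymm
      · rintro _ ⟨n, rfl⟩
        exact LinearMap.mem_ker.mpr (by
          rw [show pE (ιE n) = π₀ 0 from rfl, map_zero]; rfl)
      · intro z hz
        obtain ⟨xy, rfl⟩ := Submodule.Quotient.mk_surjective W z
        obtain ⟨x, n⟩ := xy
        have hx : π₀ x = 0 := LinearMap.mem_ker.mp hz
        have hxr : x ∈ LinearMap.range (ModuleCat.Hom.hom d10) := by
          rw [hex0]
          exact LinearMap.mem_ker.mpr hx
        obtain ⟨y, hy⟩ := hxr
        refine ⟨n + gl y, ?_⟩
        show W.mkQ (0, n + gl y) = Submodule.Quotient.mk (x, n)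
        refine (Submodule.Quotient.eq W).mpr ?_
        refine ⟨-y, ?_⟩
        have h3 : (LinearMap.prod (ModuleCat.Hom.hom d10) (-(ModuleCat.Hom.hom gl : ↥(P.complex.X 1) →ₗ[(MonoidAlgebra k S)ᵐᵒᵖ] ↥N))) (-y)
            = (-(d10 y), gl y) := by
          show (d10 (-y), -(gl (-y))) = _
          rw [map_neg, map_neg, neg_neg]
        rw [h3, hy]
        show ((-x : ↥(P.complex.X 0)), gl y) = ((0 : ↥(P.complex.X 0)) - x, (n + gl y) - n)
        rw [zero_sub, add_sub_cancel_left]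
    obtain ⟨r, hr⟩ := Stmt10.split hreg hchar he hf hMsimple hNsimple hMapex hNapex hcase
      ιE pE hιinj hpsurj hkerE
    refine ⟨ModuleCat.ofHom (r.comp (W.mkQ.comp (LinearMap.inl _ _ _))), ?_⟩
    show (P.complex.linearYonedaObj k N).d 0 1 _ = g
    rw [ChainComplex.linearYonedaObj_d]
    apply ModuleCat.hom_ext
    apply LinearMap.ext
    intro y
    show (r.comp (W.mkQ.comp (LinearMap.inl _ _ _))) (d10 y) = gl y
    have hstep : W.mkQ (d10 y, (0 : ↥N)) = W.mkQ (0, gl y) := by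
      refine (Submodule.Quotient.eq W).mpr ⟨y, ?_⟩
      show (d10 y, -(gl y)) = (d10 y - 0, (0 : ↥N) - gl y)
      rw [sub_zero, zero_sub]
    calc (r.comp (W.mkQ.comp (LinearMap.inl _ _ _))) (d10 y)
        = r (W.mkQ (d10 y, (0 : ↥N))) := rfl
      _ = r (ιE (gl y)) := by rw [hstep]; rfl
      _ = gl y := LinearMap.congr_fun hr (gl y)
  have hz2 := Limits.IsZero.of_iso hzero hiso
  let ee := hz2.iso (ModuleCat.isZero_of_subsingleton (ModuleCat.of k PUnit))
  haveI : Subsingleton (↥(ModuleCat.of k PUnit)) := inferInstanceAs (Subsingleton PUnit)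
  have h1 : ∀ z : ↥(((Ext k (ModuleCat (MonoidAlgebra k S)ᵐᵒᵖ) 1).obj (Opposite.op M)).obj N),
      ee.inv (ee.hom z) = z := by
    intro z
    calc ee.inv (ee.hom z) = (ee.hom ≫ ee.inv) z := rfl
      _ = (𝟙 (((Ext k (ModuleCat (MonoidAlgebra k S)ᵐᵒᵖ) 1).obj (Opposite.op M)).obj N)) z := by
          rw [ee.hom_inv_id]
      _ = z := rfl
  refine ⟨fun x y => ?_⟩
  rw [← h1 x, ← h1 y, Subsingleton.elim (ee.hom x) (ee.hom y)]
end

section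
/- Let S be a finite semigroup. Then the following are equivalent: (a) S is regular (for every s ∈ S there is t ∈ S with s·t·s = s) and every right ideal of S is two-sided (for every nonempty R ⊆ S with R·S ⊆ R one also has S·R ⊆ R); (b) for all s, t ∈ S and every n ≥ 1 such that s^n is idempotent, one has s^n·s = s and s^n·t·s^n = t·s^n. -/
/-- `spow s n` is the (n+1)-st power `s^(n+1)` of `s`, so that `spow s n` for `n : ℕ`
ranges over all positive powers of `s`. -/
def spow {S : Type*} [Semigroup S] (s : S) : ℕ → S
  | 0 => s
  | n + 1 => spow s n * s

lemma spow_succ_left {S : Type*} [Semigroup S] (s : S) (n : ℕ) :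
    spow s (n + 1) = s * spow s n := by
  induction n with
  | zero => rfl
  | succ k ih =>
    show spow s (k + 1) * s = s * spow s (k + 1)
    conv_lhs => rw [ih]
    rw [mul_assoc]
    rfl

lemma spow_add' {S : Type*} [Semigroup S] (s : S) (m n : ℕ) :
    spow s (m + n + 1) = spow s m * spow s n := by
  induction n with
  | zero => rfl
  | succ k ih =>
    have h : m + (k + 1) + 1 = (m + k + 1) + 1 := by omega
    rw [h]
    show spow s (m + k + 1) * s = spow s m * spow s (k + 1)
    rw [ih, mul_assoc]
    rfl

lemma spow_exists_idem {S : Type*} [Semigroup S] [Finite S] (s : S) :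
    ∃ n, spow s n * spow s n = spow s n := by
  obtain ⟨a, b, hab, heq⟩ := Finite.exists_ne_map_eq_of_infinite (spow s)
  have key : ∃ i j, i < j ∧ spow s i = spow s j := by
    rcases lt_or_gt_of_ne hab with h | h
    · exact ⟨a, b, h, heq⟩
    · exact ⟨b, a, h, heq.symm⟩
  obtain ⟨i, j, hij, hpow⟩ := key
  obtain ⟨q, rfl⟩ : ∃ q, j = i + (q + 1) := ⟨j - i - 1, by omega⟩
  have hC : ∀ c, spow s (i + c + (q + 1)) = spow s (i + c) := by
    intro c
    cases c with
    | zero => simpa using hpow.symm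
    | succ d =>
      have h1 : i + (d + 1) + (q + 1) = (i + (q + 1)) + d + 1 := by omega
      have h2 : i + (d + 1) = i + d + 1 := by omega
      rw [h1, h2, spow_add', ← hpow, ← spow_add']
  have hD : ∀ d c, spow s (i + c + d * (q + 1)) = spow s (i + c) := by
    intro d
    induction d with
    | zero => intro c; simp
    | succ e ih =>
      intro c
      have h1 : i + c + (e + 1) * (q + 1) = i + (c + e * (q + 1)) + (q + 1) := by ring
      rw [h1, hC, ← Nat.add_assoc, ih]
  refine ⟨i + q * (i + 1), ?_⟩
  rw [← spow_add']
  have h2 : (i + q * (i + 1)) + (i + q * (i + 1)) + 1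
      = i + q * (i + 1) + (i + 1) * (q + 1) := by ring
  rw [h2, hD (i + 1)]

/-- a finite semigroup `S` is regular with every right ideal two-sided
iff `s^n·s = s` and `s^n·t·s^n = t·s^n` whenever the positive power `s^n` is idempotent. -/
theorem stmt11 (S : Type*) [Semigroup S] [Finite S] :
    ((∀ s : S, ∃ t : S, s * t * s = s) ∧
      (∀ R : Set S, R.Nonempty → (∀ r ∈ R, ∀ s : S, r * s ∈ R) →
        (∀ r ∈ R, ∀ s : S, s * r ∈ R))) ↔
    (∀ s t : S, ∀ n : ℕ, spow s n * spow s n = spow s n →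
      spow s n * s = s ∧ spow s n * t * spow s n = t * spow s n) := by
  constructor
  · rintro ⟨h1, h2⟩ s t n he
    -- for any idempotent e, `e * x * e = x * e`
    have key : ∀ e : S, e * e = e → ∀ x : S, e * x * e = x * e := by
      intro e hee x
      have hRne : Set.Nonempty {y : S | ∃ u, y = e * u} := ⟨e * e, e, rfl⟩
      have hRright : ∀ r ∈ {y : S | ∃ u, y = e * u}, ∀ v : S,
          r * v ∈ {y : S | ∃ u, y = e * u} := by
        rintro r ⟨u, rfl⟩ v
        exact ⟨u * v, by rw [mul_assoc]⟩
      have heR : e ∈ {y : S | ∃ u, y = e * u} := ⟨e, hee.symm⟩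
      obtain ⟨u, hu⟩ := h2 _ hRne hRright e heR x
      calc e * x * e = e * (x * e) := mul_assoc _ _ _
        _ = e * (e * u) := by rw [hu]
        _ = e * e * u := (mul_assoc _ _ _).symm
        _ = e * u := by rw [hee]
        _ = x * e := hu.symm
    have he2 := key (spow s n) he t
    obtain ⟨t', ht'⟩ := h1 s
    set f := t' * s with hf
    have hsf : s * f = s := by rw [hf, ← mul_assoc]; exact ht'
    have hff : f * f = f := by rw [hf, mul_assoc, ← mul_assoc s t' s, ht']
    have hfs : f * s = s := by
      calc f * s = f * (s * f) := by rw [hsf]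
        _ = f * s * f := (mul_assoc _ _ _).symm
        _ = s * f := key f hff s
        _ = s := hsf
    have hfp : ∀ m, f * spow s m = spow s m := by
      intro m
      cases m with
      | zero => exact hfs
      | succ k => rw [spow_succ_left, ← mul_assoc, hfs]
    have hA : ∀ m, t' * spow s (m + 1) = spow s m := by
      intro m
      rw [spow_succ_left, ← mul_assoc, ← hf]
      exact hfp m
    have hP : ∀ k, spow t' k * spow s (k + 1) = s := by
      intro k
      induction k with
      | zero => exact hA 0
      | succ k ih =>
        show spow t' k * t' * spow s (k + 1 + 1) = s
        rw [mul_assoc, hA (k + 1)]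
        exact ih
    have h4 : spow s (n + 1) * spow s n = spow s (n + 1) := by
      rw [← spow_add']
      have h5 : n + 1 + n + 1 = (n + n + 1) + 1 := by omega
      rw [h5]
      show spow s (n + n + 1) * s = spow s (n + 1)
      rw [spow_add', he]
      rfl
    have hse : s * spow s n = s := by
      calc s * spow s n = spow t' n * spow s (n + 1) * spow s n := by rw [hP n]
        _ = spow t' n * (spow s (n + 1) * spow s n) := mul_assoc _ _ _
        _ = spow t' n * spow s (n + 1) := by rw [h4]
        _ = s := hP n
    have hes : spow s n * s = s := by
      calc spow s n * s = spow s (n + 1) := rfl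
        _ = s * spow s n := spow_succ_left s n
        _ = s := hse
    exact ⟨hes, he2⟩
  · intro hb
    constructor
    · intro s
      obtain ⟨n, hn⟩ := spow_exists_idem s
      have h1 := (hb s s n hn).1
      cases n with
      | zero =>
        refine ⟨s, ?_⟩
        have h : s * s = s := hn
        rw [h, h]
      | succ k =>
        refine ⟨spow s k, ?_⟩
        rw [← spow_succ_left]
        exact h1
    · intro R hRne hRr r hr s
      set y := r * s with hy
      set z := s * r with hz
      obtain ⟨m, hm⟩ := spow_exists_idem y
      obtain ⟨n, hn⟩ := spow_exists_idem z
      have hzz := (hb z z n hn).1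
      have hsf := (hb y s m hm).2
      have hyR : ∀ k, spow y k ∈ R := by
        intro k
        induction k with
        | zero => exact hRr r hr s
        | succ j ih => exact hRr _ ih y
      have hsfR : s * spow y m ∈ R := by
        rw [← hsf, mul_assoc]
        exact hRr _ (hyR m) _
      have hE : ∀ k, spow z (k + 1) = s * spow y k * r := by
        intro k
        induction k with
        | zero =>
          have h0 : spow z (0 + 1) = z * z := rfl
          have h0' : spow y 0 = y := rfl
          rw [h0, h0', hz, hy]
          simp only [mul_assoc]
        | succ j ih =>
          show spow z (j + 1) * z = s * (spow y j * y) * r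
          rw [ih, hz, hy]
          simp only [mul_assoc]
      have hzm : spow z (m + 1) ∈ R := by
        rw [hE m]
        exact hRr _ hsfR r
      have hG : ∀ k, spow z (k * (n + 1)) = z := by
        intro k
        induction k with
        | zero =>
          rw [Nat.zero_mul]
          rfl
        | succ j ih =>
          have h1 : (j + 1) * (n + 1) = j * (n + 1) + n + 1 := by ring
          rw [h1, spow_add', ih, ← spow_succ_left]
          exact hzz
      obtain ⟨d, hd⟩ : ∃ d, (m + 2) * (n + 1) = (m + 1) + d + 1 := by
        refine ⟨(m + 2) * (n + 1) - (m + 2), ?_⟩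
        have hkn : (m + 2) * 1 ≤ (m + 2) * (n + 1) :=
          Nat.mul_le_mul_left _ (by omega)
        rw [Nat.mul_one] at hkn
        omega
      have hfin : z = spow z (m + 1) * spow z d := by
        rw [← spow_add', ← hd]
        exact (hG (m + 2)).symm
      have : spow z (m + 1) * spow z d ∈ R := hRr _ hzm _
      rwa [← hfin] at this
end

section
/- Let S be a right regular band of groups that is a monoid, k a field, A = kS the monoid algebra, and e ∈ S an idempotent. Let M be a simple right A-module with M·e ≠ 0. Then: (a) M·e is a simple right e·A·e-module; (b) the operation v ⋆ a := v·(a·e), for v ∈ M·e and a ∈ A, makes the vector space M·e into a right A-module, and this A-module is isomorphic to M. -/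
open CategoryTheory MulOpposite ModuleCat

section Corner

variable (k : Type) [Field k] (A : Type) [Ring A] [Algebra k A]

/-- The `k`-subspace `εAε = {x : A | ε·x·ε = x}` of `A`. -/
def cornerSubmodule (ε : A) : Submodule k A where
  carrier := {x : A | ε * x * ε = x}
  add_mem' := by
    intro a b ha hb
    show ε * (a + b) * ε = a + b
    rw [mul_add, add_mul, ha, hb]
  zero_mem' := by
    show ε * 0 * ε = 0
    rw [mul_zero, zero_mul]
  smul_mem' := by
    intro c x hx
    show ε * (c • x) * ε = c • x
    rw [mul_smul_comm, smul_mul_assoc, hx]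

/-- The corner ring `εAε` at an idempotent `ε` of `A`,
a unital `k`-algebra with identity `ε`. -/
def Corner (ε : A) (_hε : ε * ε = ε) : Type := ↥(cornerSubmodule k A ε)

namespace Corner

variable {k A} {ε : A} {hε : ε * ε = ε}

instance : AddCommGroup (Corner k A ε hε) :=
  inferInstanceAs (AddCommGroup ↥(cornerSubmodule k A ε))

instance : Module k (Corner k A ε hε) :=
  inferInstanceAs (Module k ↥(cornerSubmodule k A ε))

/-- The underlying element of `A`. -/
def val (x : Corner k A ε hε) : A := (show ↥(cornerSubmodule k A ε) from x).1

theorem prop (x : Corner k A ε hε) : ε * val x * ε = val x :=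
  (show ↥(cornerSubmodule k A ε) from x).2

/-- Build an element of the corner. -/
def mk (x : A) (hx : ε * x * ε = x) : Corner k A ε hε :=
  show ↥(cornerSubmodule k A ε) from ⟨x, hx⟩

theorem val_injective : Function.Injective (val : Corner k A ε hε → A) := by
  intro a b h
  exact Subtype.ext h

theorem eps_mul (hε : ε * ε = ε) {x : A} (hx : ε * x * ε = x) : ε * x = x := by
  conv_lhs => rw [← hx]
  simp only [← mul_assoc]
  rw [hε, hx]

theorem mul_eps (hε : ε * ε = ε) {x : A} (hx : ε * x * ε = x) : x * ε = x := by
  conv_lhs => rw [← hx]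
  rw [mul_assoc, hε, hx]

theorem mem_mul (hε : ε * ε = ε) {x y : A} (hx : ε * x * ε = x) (hy : ε * y * ε = y) :
    ε * (x * y) * ε = x * y := by
  simp only [← mul_assoc]
  rw [eps_mul hε hx, mul_assoc, mul_eps hε hy]

noncomputable instance ring : Ring (Corner k A ε hε) :=
  { (inferInstance : AddCommGroup (Corner k A ε hε)) with
    mul := fun x y => mk (val x * val y) (mem_mul hε x.prop y.prop)
    mul_assoc := fun a b c => val_injective (mul_assoc (val a) (val b) (val c))
    one := mk ε (by rw [hε, hε])
    one_mul := fun a => val_injective (eps_mul hε a.prop)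
    mul_one := fun a => val_injective (mul_eps hε a.prop)
    left_distrib := fun a b c => val_injective (mul_add (val a) (val b) (val c))
    right_distrib := fun a b c => val_injective (add_mul (val a) (val b) (val c))
    zero_mul := fun a => val_injective (zero_mul (val a))
    mul_zero := fun a => val_injective (mul_zero (val a)) }

theorem val_mul (x y : Corner k A ε hε) : val (x * y) = val x * val y := rfl
theorem val_one : val (1 : Corner k A ε hε) = ε := rfl

noncomputable instance algebra : Algebra k (Corner k A ε hε) :=
  Algebra.ofModule
    (fun c x y => val_injective (by
      show (c • val x) * val y = c • (val x * val y)
      exact smul_mul_assoc c (val x) (val y)))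
    (fun c x y => val_injective (by
      show val x * (c • val y) = c • (val x * val y)
      exact mul_smul_comm c (val x) (val y)))

end Corner

end Corner

section Me

variable {k : Type} [Field k] {S : Type} [Monoid S]

theorem singleIdem (k : Type) [Field k] {S : Type} [Monoid S] {e : S} (he : e * e = e) :
    MonoidAlgebra.single e (1 : k) * MonoidAlgebra.single e (1 : k)
      = MonoidAlgebra.single e (1 : k) := by
  rw [MonoidAlgebra.single_mul_single, he, one_mul]

/-- The subspace `M·e` of a right `kS`-module `M`. -/
noncomputable def MeSub (k : Type) [Field k] {S : Type} [Monoid S] (e : S)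
    (M : ModuleCat (MonoidAlgebra k S)ᵐᵒᵖ) : Submodule k M :=
  Submodule.span k {m : M | ∃ m' : M, m = op (MonoidAlgebra.single e (1 : k)) • m'}

theorem smul_comm_k (M : ModuleCat (MonoidAlgebra k S)ᵐᵒᵖ)
    (r : (MonoidAlgebra k S)ᵐᵒᵖ) (c : k) (v : M) : r • (c • v) = c • (r • v) := by
  rw [algebra_compatible_smul (MonoidAlgebra k S)ᵐᵒᵖ c v,
    algebra_compatible_smul (MonoidAlgebra k S)ᵐᵒᵖ c (r • v),
    smul_smul, smul_smul, Algebra.commutes]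

theorem e_smul_of_mem {e : S}
    (hε : MonoidAlgebra.single e (1 : k) * MonoidAlgebra.single e (1 : k)
      = MonoidAlgebra.single e (1 : k))
    (M : ModuleCat (MonoidAlgebra k S)ᵐᵒᵖ) {v : M} (hv : v ∈ MeSub k e M) :
    op (MonoidAlgebra.single e (1 : k)) • v = v := by
  induction hv using Submodule.span_induction with
  | mem w hw =>
      obtain ⟨m, rfl⟩ := hw
      rw [smul_smul, ← op_mul, hε]
  | zero => rw [smul_zero]
  | add a b _ _ ha hb => rw [smul_add, ha, hb]
  | smul c a _ ha => rw [smul_comm_k, ha]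

theorem smul_eps_mem {e : S} (a : MonoidAlgebra k S) (M : ModuleCat (MonoidAlgebra k S)ᵐᵒᵖ)
    (v : M) : op (a * MonoidAlgebra.single e (1 : k)) • v ∈ MeSub k e M := by
  apply Submodule.subset_span
  exact ⟨op a • v, by rw [smul_smul, ← op_mul]⟩

/-- Right multiplication by elements of the corner algebra `e·kS·e`, as a ring
homomorphism from the opposite of the corner algebra to the endomorphisms of `M·e`. -/
noncomputable def cornerHom (e : S)
    (hε : MonoidAlgebra.single e (1 : k) * MonoidAlgebra.single e (1 : k)
      = MonoidAlgebra.single e (1 : k))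
    (M : ModuleCat (MonoidAlgebra k S)ᵐᵒᵖ) :
    (Corner k (MonoidAlgebra k S) (MonoidAlgebra.single e (1 : k)) hε)ᵐᵒᵖ →+*
      Module.End k ↥(MeSub k e M) where
  toFun b :=
    { toFun := fun v => ⟨op (Corner.val (unop b)) • v.1, by
        rw [← Corner.mul_eps hε (unop b).prop]
        exact smul_eps_mem _ M v.1⟩
      map_add' := fun a b => Subtype.ext (by
        show op _ • ((a : M) + (b : M)) = op _ • (a : M) + op _ • (b : M)
        rw [smul_add])
      map_smul' := fun c a => Subtype.ext (by
        show op _ • ((c • a : ↥(MeSub k e M)) : M) = c • (op _ • (a : M))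
        rw [Submodule.coe_smul, smul_comm_k]) }
  map_one' := by
    ext v
    show op (Corner.val (1 : Corner k (MonoidAlgebra k S) _ _)) • (v : M) = (v : M)
    rw [Corner.val_one]
    exact e_smul_of_mem hε M v.2
  map_mul' x y := by
    ext v
    show op (Corner.val (unop y * unop x)) • (v : M)
      = op (Corner.val (unop x)) • (op (Corner.val (unop y)) • (v : M))
    rw [Corner.val_mul, smul_smul, ← op_mul]
  map_zero' := by
    ext v
    show op (Corner.val (0 : Corner k (MonoidAlgebra k S) _ _)) • (v : M) = 0
    show op ((0 : MonoidAlgebra k S)) • (v : M) = 0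
    rw [op_zero, zero_smul]
  map_add' x y := by
    ext v
    show op (Corner.val (unop x + unop y)) • (v : M)
      = op (Corner.val (unop x)) • (v : M) + op (Corner.val (unop y)) • (v : M)
    show op (Corner.val (unop x) + Corner.val (unop y)) • (v : M) = _
    rw [MulOpposite.op_add, add_smul]

/-- `M·e` is a right module over the corner algebra `e·kS·e`. -/
noncomputable instance cornerModule (e : S)
    (hε : MonoidAlgebra.single e (1 : k) * MonoidAlgebra.single e (1 : k)
      = MonoidAlgebra.single e (1 : k))
    (M : ModuleCat (MonoidAlgebra k S)ᵐᵒᵖ) :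
    Module (Corner k (MonoidAlgebra k S) (MonoidAlgebra.single e (1 : k)) hε)ᵐᵒᵖ
      ↥(MeSub k e M) :=
  Module.compHom _ (cornerHom e hε M)

theorem eps_conj {e : S} (he : e * e = e) (h2e : ∀ t : S, e * t * e = t * e)
    (c : MonoidAlgebra k S) :
    MonoidAlgebra.single e (1 : k) * c * MonoidAlgebra.single e (1 : k)
      = c * MonoidAlgebra.single e (1 : k) := by
  induction c using MonoidAlgebra.induction_on with
  | of g =>
      simp only [MonoidAlgebra.of_apply, MonoidAlgebra.single_mul_single, one_mul, h2e g]
  | add f g hf hg => rw [mul_add, add_mul, hf, hg, add_mul]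
  | smul c f hf =>
      rw [mul_smul_comm, smul_mul_assoc, hf, smul_mul_assoc]

/-- The `⋆`-action `v ⋆ a := v·(a·e)` of `kS` on `M·e`, as a ring homomorphism. -/
noncomputable def starHom (e : S) (he : e * e = e) (h2e : ∀ t : S, e * t * e = t * e)
    (M : ModuleCat (MonoidAlgebra k S)ᵐᵒᵖ) :
    (MonoidAlgebra k S)ᵐᵒᵖ →+* Module.End k ↥(MeSub k e M) where
  toFun a :=
    { toFun := fun v => ⟨op (unop a * MonoidAlgebra.single e (1 : k)) • v.1,
        smul_eps_mem _ M v.1⟩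
      map_add' := fun x y => Subtype.ext (by
        show op _ • ((x : M) + (y : M)) = op _ • (x : M) + op _ • (y : M)
        rw [smul_add])
      map_smul' := fun c x => Subtype.ext (by
        show op _ • ((c • x : ↥(MeSub k e M)) : M) = c • (op _ • (x : M))
        rw [Submodule.coe_smul, smul_comm_k]) }
  map_one' := by
    ext v
    show op ((1 : MonoidAlgebra k S) * MonoidAlgebra.single e (1 : k)) • (v : M) = (v : M)
    rw [one_mul]
    exact e_smul_of_mem (singleIdem k he) M v.2
  map_mul' x y := by
    ext v
    show op (unop y * unop x * MonoidAlgebra.single e (1 : k)) • (v : M)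
      = op (unop x * MonoidAlgebra.single e (1 : k)) •
          (op (unop y * MonoidAlgebra.single e (1 : k)) • (v : M))
    rw [smul_smul, ← op_mul]
    congr 2
    symm
    calc unop y * MonoidAlgebra.single e (1 : k) *
          (unop x * MonoidAlgebra.single e (1 : k))
        = unop y * (MonoidAlgebra.single e (1 : k) * unop x *
            MonoidAlgebra.single e (1 : k)) := by
          simp only [mul_assoc]
      _ = unop y * (unop x * MonoidAlgebra.single e (1 : k)) := by
          rw [eps_conj he h2e]
      _ = unop y * unop x * MonoidAlgebra.single e (1 : k) := by
          rw [mul_assoc]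
  map_zero' := by
    ext v
    show op ((0 : MonoidAlgebra k S) * MonoidAlgebra.single e (1 : k)) • (v : M) = 0
    rw [zero_mul, op_zero, zero_smul]
  map_add' x y := by
    ext v
    show op ((unop x + unop y) * MonoidAlgebra.single e (1 : k)) • (v : M)
      = op (unop x * MonoidAlgebra.single e (1 : k)) • (v : M) +
        op (unop y * MonoidAlgebra.single e (1 : k)) • (v : M)
    rw [add_mul, MulOpposite.op_add, add_smul]

/-- The right `kS`-module structure `v ⋆ a := v·(a·e)` on `M·e`. -/
noncomputable def starModule (e : S) (he : e * e = e) (h2e : ∀ t : S, e * t * e = t * e)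
    (M : ModuleCat (MonoidAlgebra k S)ᵐᵒᵖ) :
    Module (MonoidAlgebra k S)ᵐᵒᵖ ↥(MeSub k e M) :=
  Module.compHom _ (starHom e he h2e M)

end Me

/-- let `S` be a right regular band of groups which is a monoid, `k` a
field, `A = kS`, `e ∈ S` an idempotent, and `M` a simple right `A`-module with `M·e ≠ 0`.
Then (a) `M·e` is a simple right `eAe`-module, and (b) the action `v ⋆ a := v·(a·e)`
makes `M·e` a right `A`-module isomorphic to `M`. -/
theorem stmt16 (k : Type) [Field k] (S : Type) [Monoid S] [Finite S]
    (h1 : ∀ s : S, ∀ n : ℕ, spow s n * spow s n = spow s n → spow s n * s = s)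
    (h2 : ∀ e : S, e * e = e → ∀ t : S, e * t * e = t * e)
    (e : S) (he : e * e = e)
    (M : ModuleCat (MonoidAlgebra k S)ᵐᵒᵖ)
    (hMsimple : IsSimpleModule (MonoidAlgebra k S)ᵐᵒᵖ M)
    (hMe : ∃ m : M, op (MonoidAlgebra.single e (1 : k)) • m ≠ 0) :
    IsSimpleModule (Corner k (MonoidAlgebra k S) (MonoidAlgebra.single e (1 : k))
        (singleIdem k he))ᵐᵒᵖ ↥(MeSub k e M) ∧
    (letI : Module (MonoidAlgebra k S)ᵐᵒᵖ ↥(MeSub k e M) := starModule e he (h2 e he) M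
     Nonempty (↥(MeSub k e M) ≃ₗ[(MonoidAlgebra k S)ᵐᵒᵖ] M)) := by
  have hεε : MonoidAlgebra.single e (1 : k) * MonoidAlgebra.single e (1 : k)
      = MonoidAlgebra.single e (1 : k) := singleIdem k he
  set ε : MonoidAlgebra k S := MonoidAlgebra.single e (1 : k) with hεdef
  have hconj : ∀ c : MonoidAlgebra k S, ε * c * ε = c * ε := eps_conj he (h2 e he)
  constructor
  · -- Part (a): M·e is a simple right eAe-module
    haveI : Nontrivial ↥(MeSub k e M) := by
      obtain ⟨m, hm⟩ := hMe
      refine ⟨⟨op ε • m, Submodule.subset_span ⟨m, rfl⟩⟩, 0, fun h => hm ?_⟩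
      simpa using congrArg Subtype.val h
    refine (isSimpleModule_iff _ _).mpr ?_
    constructor
    intro N
    rcases eq_or_ne N ⊥ with hN | hN
    · exact Or.inl hN
    right
    obtain ⟨v, hvN, hv⟩ := (Submodule.ne_bot_iff N).mp hN
    rw [eq_top_iff]
    intro w _
    have hv1 : (v : M) ≠ 0 := fun h => hv (Subtype.ext h)
    have hspan : Submodule.span (MonoidAlgebra k S)ᵐᵒᵖ {(v : M)} = ⊤ := by
      rcases hMsimple.eq_bot_or_eq_top (Submodule.span (MonoidAlgebra k S)ᵐᵒᵖ {(v : M)})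
        with h | h
      · exact absurd (Submodule.span_singleton_eq_bot.mp h) hv1
      · exact h
    have hwmem : (w : M) ∈ Submodule.span (MonoidAlgebra k S)ᵐᵒᵖ {(v : M)} := by
      rw [hspan]; trivial
    obtain ⟨r, hr⟩ := Submodule.mem_span_singleton.mp hwmem
    have hc : ε * (ε * unop r * ε) * ε = ε * unop r * ε := by
      simp only [← mul_assoc]
      rw [hεε, mul_assoc, hεε]
    have hv2 : op ε • (v : M) = (v : M) := e_smul_of_mem hεε M v.2
    have hw : w = (op (Corner.mk (ε * unop r * ε) hc :
        Corner k (MonoidAlgebra k S) ε hεε)) • v := by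
      apply Subtype.ext
      show (w : M) = op (ε * unop r * ε) • (v : M)
      calc (w : M) = op ε • (w : M) := (e_smul_of_mem hεε M w.2).symm
        _ = op ε • r • op ε • (v : M) := by rw [hv2, hr]
        _ = op (ε * unop r * ε) • (v : M) := by
            rw [smul_smul, smul_smul]
            congr 1
            rw [← op_unop r]
            simp only [← op_mul]
            rw [unop_op]
            exact congrArg op (mul_assoc ε (unop r) ε).symm
    rw [hw]
    exact N.smul_mem _ hvN
  · -- Part (b)
    letI : Module (MonoidAlgebra k S)ᵐᵒᵖ ↥(MeSub k e M) := starModule e he (h2 e he) M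
    let Φ : M →ₗ[(MonoidAlgebra k S)ᵐᵒᵖ] ↥(MeSub k e M) :=
      { toFun := fun m => ⟨op ε • m, Submodule.subset_span ⟨m, rfl⟩⟩
        map_add' := fun m n => Subtype.ext (smul_add _ m n)
        map_smul' := fun r m => Subtype.ext (by
          show op ε • (r • m) = op (unop r * ε) • (op ε • m)
          rw [smul_smul, smul_smul]
          congr 1
          rw [← op_unop r]
          simp only [← op_mul]
          rw [unop_op]
          exact congrArg op (by rw [← mul_assoc]; exact (hconj _).symm)) }
    have hinj : Function.Injective Φ := by
      rw [← LinearMap.ker_eq_bot]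
      rcases hMsimple.eq_bot_or_eq_top (LinearMap.ker Φ) with h | h
      · exact h
      · exfalso
        obtain ⟨m, hm⟩ := hMe
        have : Φ m = 0 := by rw [← LinearMap.mem_ker, h]; trivial
        exact hm (congrArg Subtype.val this)
    have hsurj : Function.Surjective Φ := by
      intro w
      exact ⟨(w : M), Subtype.ext (e_smul_of_mem hεε M w.2)⟩
    exact ⟨(LinearEquiv.ofBijective Φ ⟨hinj, hsurj⟩).symm⟩
end

section
/- Let S be a right regular band of groups that is a monoid, let G be its group of units, let J be the minimal two-sided ideal of S (the two-sided ideal contained in every two-sided ideal), let e ∈ J be an idempotent, and set I = S \ G. For x, x' ∈ J, write x ⌣ x' if x·e = x'·e and there exists w ∈ I \ J with x·w = x and x'·w = x'. Then: (a) for every g ∈ G, x ⌣ x' implies x·g ⌣ x'·g; (b) for every h ∈ e·J·e, x ⌣ x' implies h·x ⌣ h·x'. -/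
/-- let `S` be a right regular band of groups which is a monoid, `G` its
group of units, `J` the minimal two-sided ideal, `e ∈ J` an idempotent and `I = S \ G`.
If `x ⌣ x'` (i.e. `x·e = x'·e` and `x·w = x`, `x'·w = x'` for some `w ∈ I \ J`), then
`x·g ⌣ x'·g` for all `g ∈ G` and `h·x ⌣ h·x'` for all `h ∈ e·J·e`. -/
theorem stmt18 (S : Type*) [Monoid S] [Finite S]
    (h1 : ∀ s : S, ∀ n : ℕ, spow s n * spow s n = spow s n → spow s n * s = s)
    (h2 : ∀ e : S, e * e = e → ∀ t : S, e * t * e = t * e)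
    (J : Set S) (hJne : J.Nonempty)
    (hJideal : ∀ a ∈ J, ∀ s : S, a * s ∈ J ∧ s * a ∈ J)
    (hJmin : ∀ I : Set S, I.Nonempty → (∀ a ∈ I, ∀ s : S, a * s ∈ I ∧ s * a ∈ I) → J ⊆ I)
    (e : S) (heJ : e ∈ J) (he : e * e = e)
    (x x' : S) (hx : x ∈ J) (hx' : x' ∈ J)
    (hrel : x * e = x' * e ∧
      ∃ w : S, ¬ IsUnit w ∧ w ∉ J ∧ x * w = x ∧ x' * w = x') :
    (∀ g : S, IsUnit g →
      (x * g) * e = (x' * g) * e ∧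
        ∃ w : S, ¬ IsUnit w ∧ w ∉ J ∧ (x * g) * w = x * g ∧ (x' * g) * w = x' * g) ∧
    (∀ h : S, (∃ j ∈ J, h = e * j * e) →
      (h * x) * e = (h * x') * e ∧
        ∃ w : S, ¬ IsUnit w ∧ w ∉ J ∧ (h * x) * w = h * x ∧ (h * x') * w = h * x') := by
  obtain ⟨hxe, w, hwnu, hwJ, hxw, hx'w⟩ := hrel
  constructor
  · intro g hg
    obtain ⟨u, rfl⟩ := hg
    constructor
    · have key : ∀ y : S, y * ((u : S) * e) = (y * e) * ((u : S) * e) := by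
        intro y
        calc y * ((u : S) * e) = y * (e * (u : S) * e) := by rw [h2 e he (u : S)]
          _ = (y * e) * ((u : S) * e) := by simp [mul_assoc]
      calc x * (u : S) * e = x * ((u : S) * e) := by rw [mul_assoc]
        _ = (x * e) * ((u : S) * e) := key x
        _ = (x' * e) * ((u : S) * e) := by rw [hxe]
        _ = x' * ((u : S) * e) := (key x').symm
        _ = x' * (u : S) * e := by rw [mul_assoc]
    · refine ⟨(u⁻¹ : Sˣ) * w * (u : S), ?_, ?_, ?_, ?_⟩
      · intro hu
        apply hwnu
        have hw : w = (u : S) * ((u⁻¹ : Sˣ) * w * (u : S)) * ((u⁻¹ : Sˣ) : S) := by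
          simp [mul_assoc]
        rw [hw]
        exact (u.isUnit.mul hu).mul u⁻¹.isUnit
      · intro hmem
        apply hwJ
        have ha := (hJideal _ hmem ((u⁻¹ : Sˣ) : S)).1
        have hb := (hJideal _ ha (u : S)).2
        have hc : (u : S) * ((u⁻¹ : Sˣ) * w * (u : S) * ((u⁻¹ : Sˣ) : S)) = w := by
          simp [mul_assoc]
        rwa [hc] at hb
      · have hs : x * (u : S) * ((u⁻¹ : Sˣ) * w * (u : S)) = x * w * (u : S) := by
          simp [mul_assoc]
        rw [hs, hxw]
      · have hs : x' * (u : S) * ((u⁻¹ : Sˣ) * w * (u : S)) = x' * w * (u : S) := by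
          simp [mul_assoc]
        rw [hs, hx'w]
  · intro h _
    refine ⟨by rw [mul_assoc, mul_assoc, hxe], w, hwnu, hwJ, ?_, ?_⟩
    · rw [mul_assoc, hxw]
    · rw [mul_assoc, hx'w]
end
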